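/- arXiv:2102.02663 — 5 statements merged into one kernel-verified Lean document; each statement's English description precedes it below -/
import Mathlib

section
/- For x > 0 and ν > -1/2, the modified Bessel function of the first kind satisfies I_ν(x) > I_{ν+1}(x). -/
open Real Finset

set_option maxHeartbeats 1000000

/-- Modified Bessel function of the first kind. -/
noncomputable def besselI (ν x : ℝ) : ℝ :=
  ∑' k : ℕ, (x / 2) ^ (ν + 2 * (k : ℝ)) / (Real.Gamma (ν + k + 1) * k.factorial)

noncomputable def besselU (ν : ℝ) (n : ℕ) : ℝ :=
  (-1)^n / (2^n * Real.Gamma (ν + (n/2 : ℕ) + 1 + (n % 2 : ℕ)) * (n/2).factorial)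

lemma besselU_even (ν : ℝ) (k : ℕ) :
    besselU ν (2*k) = 1 / (2^(2*k) * Real.Gamma (ν + k + 1) * k.factorial) := by
  unfold besselU
  have h1 : (2*k)/2 = k := by omega
  have h2 : (2*k) % 2 = 0 := by omega
  rw [h1, h2]
  norm_num [pow_mul]

lemma besselU_odd (ν : ℝ) (k : ℕ) :
    besselU ν (2*k+1) = -(1 / (2^(2*k+1) * Real.Gamma (ν + k + 2) * k.factorial)) := by
  unfold besselU
  have h1 : (2*k+1)/2 = k := by omega
  have h2 : (2*k+1) % 2 = 1 := by omega
  rw [h1, h2]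
  rw [show ν + (k:ℝ) + 1 + ((1:ℕ):ℝ) = ν + k + 2 by push_cast; ring]
  have : (-1:ℝ)^(2*k+1) = -1 := by simp [pow_succ, pow_mul]
  rw [this]
  ring

lemma gammaPos {ν : ℝ} (hν : -1/2 < ν) (k : ℕ) : 0 < Real.Gamma (ν + k + 1) := by
  apply Real.Gamma_pos_of_pos
  have : (0:ℝ) ≤ k := Nat.cast_nonneg k
  linarith

lemma gammaLB {ν : ℝ} (hν : -1/2 < ν) (k : ℕ) :
    Real.Gamma (ν + 1) / 2^k ≤ Real.Gamma (ν + k + 1) := by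
  induction k with
  | zero => simp
  | succ k ih =>
    have hk : (0:ℝ) ≤ k := Nat.cast_nonneg k
    have hpos := gammaPos hν k
    have hrec : Real.Gamma (ν + (k+1:ℕ) + 1) = (ν + k + 1) * Real.Gamma (ν + k + 1) := by
      rw [show ν + ((k+1:ℕ):ℝ) + 1 = (ν + k + 1) + 1 by push_cast; ring,
        Real.Gamma_add_one (by linarith : (0:ℝ) < ν + k + 1).ne']
    rw [hrec]
    have h1 : Real.Gamma (ν + 1) / 2^(k+1) = (1/2) * (Real.Gamma (ν + 1) / 2^k) := by ring
    rw [h1]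
    have h2 : (1/2 : ℝ) ≤ ν + k + 1 := by linarith
    calc (1/2:ℝ) * (Real.Gamma (ν + 1) / 2^k) ≤ (1/2) * Real.Gamma (ν + k + 1) := by
          apply mul_le_mul_of_nonneg_left ih (by norm_num)
      _ ≤ (ν + k + 1) * Real.Gamma (ν + k + 1) := by
          apply mul_le_mul_of_nonneg_right h2 hpos.le

lemma summAbsEven {ν x : ℝ} (hν : -1/2 < ν) (hx : 0 < x) :
    Summable fun k : ℕ => ‖besselU ν (2*k) * x^(2*k)‖ := by
  have hΓ1 : 0 < Real.Gamma (ν+1) := by simpa using gammaPos hν 0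
  apply Summable.of_nonneg_of_le (f := fun k : ℕ => (x^2/2)^k / k.factorial * (Real.Gamma (ν+1))⁻¹)
    (fun k => norm_nonneg _)
  · intro k
    have hp := gammaPos hν k
    have hkf : (0:ℝ) < k.factorial := by positivity
    rw [besselU_even, Real.norm_eq_abs, abs_of_nonneg (by positivity)]
    have hL : (1 / (2^(2*k) * Real.Gamma (ν + k + 1) * (k.factorial:ℝ))) * x^(2*k)
        = x^(2*k) / (2^(2*k) * Real.Gamma (ν + k + 1) * k.factorial) := by ring
    have hR : (x^2/2)^k / (k.factorial:ℝ) * (Real.Gamma (ν+1))⁻¹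
        = x^(2*k) / (2^k * Real.Gamma (ν+1) * k.factorial) := by
      rw [pow_mul, div_pow]
      field_simp
    rw [hL, hR]
    apply div_le_div_of_nonneg_left (by positivity) (by positivity)
    have hlb := gammaLB hν k
    rw [div_le_iff₀ (by positivity : (0:ℝ) < 2^k)] at hlb
    have h4 : (2:ℝ)^(2*k) = 2^k * 2^k := by rw [two_mul, pow_add]
    rw [h4]
    calc (2:ℝ)^k * Real.Gamma (ν+1) * k.factorial
        ≤ 2^k * (Real.Gamma (ν+k+1) * 2^k) * k.factorial := by
          apply mul_le_mul_of_nonneg_right _ hkf.le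
          apply mul_le_mul_of_nonneg_left hlb (by positivity)
      _ = 2^k * 2^k * Real.Gamma (ν+k+1) * k.factorial := by ring
  · exact (Real.summable_pow_div_factorial (x^2/2)).mul_right _

lemma summAbsOdd {ν x : ℝ} (hν : -1/2 < ν) (hx : 0 < x) :
    Summable fun k : ℕ => ‖besselU ν (2*k+1) * x^(2*k+1)‖ := by
  have hΓ1 : 0 < Real.Gamma (ν+1) := by simpa using gammaPos hν 0
  apply Summable.of_nonneg_of_le
    (f := fun k : ℕ => (x^2/2)^k / k.factorial * ((Real.Gamma (ν+1))⁻¹ * x))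
    (fun k => norm_nonneg _)
  · intro k
    have hp : 0 < Real.Gamma (ν + k + 2) := by
      have := gammaPos hν (k+1)
      rwa [show ν + ((k+1:ℕ):ℝ) + 1 = ν + k + 2 by push_cast; ring] at this
    have hkf : (0:ℝ) < k.factorial := by positivity
    rw [besselU_odd, Real.norm_eq_abs]
    rw [show -(1 / (2^(2*k+1) * Real.Gamma (ν + k + 2) * (k.factorial:ℝ))) * x^(2*k+1)
        = -(x^(2*k+1) / (2^(2*k+1) * Real.Gamma (ν + k + 2) * k.factorial)) by ring]
    rw [abs_neg, abs_of_nonneg (by positivity)]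
    have hR : (x^2/2)^k / (k.factorial:ℝ) * ((Real.Gamma (ν+1))⁻¹ * x)
        = x^(2*k+1) / (2^k * Real.Gamma (ν+1) * k.factorial) := by
      rw [pow_add, pow_mul, div_pow, pow_one]
      field_simp
    rw [hR]
    apply div_le_div_of_nonneg_left (by positivity) (by positivity)
    have hlb := gammaLB hν (k+1)
    rw [show ν + ((k+1:ℕ):ℝ) + 1 = ν + k + 2 by push_cast; ring] at hlb
    rw [div_le_iff₀ (by positivity : (0:ℝ) < 2^(k+1))] at hlb
    have h4 : (2:ℝ)^(2*k+1) = 2^k * 2^(k+1) := by rw [← pow_add]; congr 1; omega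
    rw [h4]
    calc (2:ℝ)^k * Real.Gamma (ν+1) * k.factorial
        ≤ 2^k * (Real.Gamma (ν+k+2) * 2^(k+1)) * k.factorial := by
          apply mul_le_mul_of_nonneg_right _ hkf.le
          apply mul_le_mul_of_nonneg_left hlb (by positivity)
      _ = 2^k * 2^(k+1) * Real.Gamma (ν+k+2) * k.factorial := by ring
  · exact (Real.summable_pow_div_factorial (x^2/2)).mul_right _

lemma besselC_nonneg {ν : ℝ} (hν : -1/2 < ν) (m : ℕ) :
    0 ≤ besselU ν m + ((m:ℝ)+1) * besselU ν (m+1) := by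
  have hΓ : ∀ k : ℕ, 0 < Real.Gamma (ν + k + 1) := gammaPos hν
  rcases Nat.even_or_odd m with ⟨k, hk⟩ | ⟨k, hk⟩
  · subst hk
    rw [show k + k = 2*k by ring]
    rw [show 2*k+1 = 2*k+1 from rfl, besselU_even, besselU_odd]
    have h1 := hΓ k
    have h2 : Real.Gamma (ν + k + 2) = (ν + k + 1) * Real.Gamma (ν + k + 1) := by
      rw [show ν + (k:ℝ) + 2 = (ν + k + 1) + 1 by ring,
        Real.Gamma_add_one (by have : (0:ℝ) ≤ k := Nat.cast_nonneg k; linarith)]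
    have hkf : (0:ℝ) < k.factorial := by positivity
    have hν1 : (0:ℝ) < ν + k + 1 := by have : (0:ℝ) ≤ k := Nat.cast_nonneg k; linarith
    have key : 1 / (2^(2*k) * Real.Gamma (ν + k + 1) * (k.factorial:ℝ)) +
        (((2*k:ℕ):ℝ)+1) * -(1 / (2^(2*k+1) * Real.Gamma (ν + k + 2) * k.factorial))
        = (2*ν+1) / (2^(2*k+1) * (ν+k+1) * Real.Gamma (ν + k + 1) * k.factorial) := by
      rw [h2]
      push_cast
      rw [pow_succ]
      field_simp
      ring
    rw [key]
    have h2ν : (0:ℝ) < 2*ν+1 := by linarith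
    positivity
  · subst hk
    rw [show 2*k+1+1 = 2*(k+1) by ring, besselU_odd, besselU_even]
    have h1 : 0 < Real.Gamma (ν + ((k+1:ℕ):ℝ) + 1) := hΓ (k+1)
    have hc : ν + ((k+1:ℕ):ℝ) + 1 = ν + k + 2 := by push_cast; ring
    rw [hc] at h1 ⊢
    have hkf : (0:ℝ) < k.factorial := by positivity
    have hfs : ((k+1).factorial : ℝ) = (k+1) * k.factorial := by
      rw [Nat.factorial_succ]; push_cast; ring
    have key : -(1 / (2^(2*k+1) * Real.Gamma (ν + k + 2) * (k.factorial:ℝ))) +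
        (((2*k+1:ℕ):ℝ)+1) * (1 / (2^(2*(k+1)) * Real.Gamma (ν + k + 2) * ((k+1).factorial:ℝ)))
        = 0 := by
      rw [hfs]
      push_cast
      rw [show 2*(k+1) = (2*k+1)+1 by ring, pow_succ]
      field_simp
      ring
    rw [key]

lemma besselS_identity (ν : ℝ) (n : ℕ) :
    ((n:ℝ)+1) * ∑ m ∈ Finset.range (n+2), besselU ν m / (n+1-m).factorial
      = ∑ m ∈ Finset.range (n+1),
          (besselU ν m + ((m:ℝ)+1) * besselU ν (m+1)) / (n-m).factorial := by
  have key : ∀ m ∈ Finset.range (n+1), ((n:ℝ)+1) * (besselU ν m / (n+1-m).factorial)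
      = besselU ν m / (n-m).factorial + (m:ℝ) * (besselU ν m / (n+1-m).factorial) := by
    intro m hm
    have hm' : m ≤ n := by simpa [Nat.lt_succ_iff] using hm
    have hfac : ((n+1-m).factorial : ℝ) = ((n:ℝ)+1-m) * (n-m).factorial := by
      rw [show n+1-m = (n-m)+1 by omega, Nat.factorial_succ]
      push_cast [Nat.cast_sub hm']
      ring
    have hpos : (0:ℝ) < (n-m).factorial := by positivity
    have hc : ((n:ℝ)+1-m) ≠ 0 := by
      have : (m:ℝ) ≤ n := by exact_mod_cast hm'
      linarith
    rw [hfac]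
    field_simp
    ring
  rw [Finset.mul_sum, Finset.sum_range_succ, Finset.sum_congr rfl key]
  rw [Finset.sum_add_distrib]
  have hlast : ((n:ℝ)+1) * (besselU ν (n+1) / (n+1-(n+1)).factorial)
      = ((n:ℝ)+1) * besselU ν (n+1) := by simp
  rw [hlast]
  have hshift : (∑ m ∈ Finset.range (n+1), (m:ℝ) * (besselU ν m / (n+1-m).factorial))
      + ((n:ℝ)+1) * besselU ν (n+1)
      = ∑ m ∈ Finset.range (n+1), ((m:ℝ)+1) * besselU ν (m+1) / (n-m).factorial := by
    have h1 : (∑ m ∈ Finset.range (n+1), (m:ℝ) * (besselU ν m / (n+1-m).factorial))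
        + ((n:ℝ)+1) * besselU ν (n+1)
        = ∑ m ∈ Finset.range (n+2), (m:ℝ) * (besselU ν m / (n+1-m).factorial) := by
      conv_rhs => rw [Finset.sum_range_succ]
      have hz : n + 1 - (n+1) = 0 := by omega
      rw [hz]
      push_cast
      simp
    rw [h1, Finset.sum_range_succ']
    simp only [Nat.cast_zero, zero_mul, add_zero, Nat.cast_add, Nat.cast_one]
    apply Finset.sum_congr rfl
    intro i hi
    have : n + 1 - (i+1) = n - i := by omega
    rw [this]
    ring
  rw [add_assoc, hshift, ← Finset.sum_add_distrib]
  apply Finset.sum_congr rfl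
  intro m hm
  ring

lemma besselS_nonneg {ν : ℝ} (hν : -1/2 < ν) (n : ℕ) :
    0 ≤ ∑ m ∈ Finset.range (n+1), besselU ν m / (n - m).factorial := by
  cases n with
  | zero =>
    have h0 : besselU ν 0 = 1 / Real.Gamma (ν + 1) := by
      have := besselU_even ν 0
      norm_num at this
      simpa using this
    have := gammaPos hν 0
    norm_num at this ⊢
    rw [h0]
    positivity
  | succ n =>
    have hid := besselS_identity ν n
    have hrhs : 0 ≤ ∑ m ∈ Finset.range (n+1),
        (besselU ν m + ((m:ℝ)+1) * besselU ν (m+1)) / (n-m).factorial := by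
      apply Finset.sum_nonneg
      intro m hm
      apply div_nonneg (besselC_nonneg hν m) (by positivity)
    have hpos : (0:ℝ) < (n:ℝ)+1 := by positivity
    nlinarith [hid, hrhs, hpos]

theorem besselI_gt_besselI_succ {x ν : ℝ} (hx : 0 < x) (hν : -1/2 < ν) :
    besselI ν x > besselI (ν + 1) x := by
  have hq : (0:ℝ) < x/2 := by linarith
  have hν' : -1/2 < ν + 1 := by linarith
  -- Step A : besselI ν x = (x/2)^ν * ∑' k, besselU ν (2k) * x^(2k)
  have hA : besselI ν x = (x/2)^ν * ∑' k : ℕ, besselU ν (2*k) * x^(2*k) := by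
    rw [besselI, ← tsum_mul_left]
    apply tsum_congr
    intro k
    rw [besselU_even]
    rw [show ν + 2*(k:ℝ) = ν + ((2*k:ℕ):ℝ) by push_cast; ring,
      Real.rpow_add hq, Real.rpow_natCast, div_pow]
    have hΓ := gammaPos hν k
    have hkf : (0:ℝ) < k.factorial := by positivity
    field_simp
  -- Step B : besselI (ν+1) x = (x/2)^ν * ∑' k, -(besselU ν (2k+1) * x^(2k+1))
  have hB : besselI (ν+1) x = (x/2)^ν * ∑' k : ℕ, -(besselU ν (2*k+1) * x^(2*k+1)) := by
    rw [besselI, ← tsum_mul_left]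
    apply tsum_congr
    intro k
    rw [besselU_odd]
    have hc : ν + 1 + (k:ℝ) + 1 = ν + k + 2 := by ring
    rw [hc]
    rw [show ν + 1 + 2*(k:ℝ) = ν + ((2*k+1:ℕ):ℝ) by push_cast; ring,
      Real.rpow_add hq, Real.rpow_natCast, div_pow]
    have hΓ : 0 < Real.Gamma (ν + k + 2) := by
      have := gammaPos hν (k+1)
      rwa [show ν + ((k+1:ℕ):ℝ) + 1 = ν + k + 2 by push_cast; ring] at this
    have hkf : (0:ℝ) < k.factorial := by positivity
    field_simp
  -- summability
  have hEabs := summAbsEven hν hx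
  have hOabs := summAbsOdd hν hx
  have hfull : Summable fun n : ℕ => ‖besselU ν n * x^n‖ :=
    Summable.even_add_odd hEabs hOabs
  have hE : Summable fun k : ℕ => besselU ν (2*k) * x^(2*k) := hEabs.of_norm
  have hO : Summable fun k : ℕ => besselU ν (2*k+1) * x^(2*k+1) := hOabs.of_norm
  -- the difference
  have hsplit := tsum_even_add_odd (f := fun n : ℕ => besselU ν n * x^n) hE hO
  have hdiff : besselI ν x - besselI (ν+1) x = (x/2)^ν * ∑' n : ℕ, besselU ν n * x^n := by
    rw [hA, hB, tsum_neg, ← hsplit]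
    ring
  -- positivity of the full sum via Cauchy product with exp-like series
  have hexp : Summable fun n : ℕ => ‖x^n / (n.factorial : ℝ)‖ := by
    exact (Real.summable_pow_div_factorial x).abs
  have hprod := tsum_mul_tsum_eq_tsum_sum_range_of_summable_norm hfull hexp
  have hinner : ∀ n : ℕ,
      (∑ k ∈ Finset.range (n+1), (besselU ν k * x^k) * (x^(n-k) / (n-k).factorial))
      = x^n * ∑ m ∈ Finset.range (n+1), besselU ν m / (n-m).factorial := by
    intro n
    rw [Finset.mul_sum]
    apply Finset.sum_congr rfl
    intro k hk
    have hk' : k ≤ n := by simpa [Nat.lt_succ_iff] using hk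
    have hxx : x^k * x^(n-k) = x^n := by rw [← pow_add]; congr 1; omega
    calc besselU ν k * x^k * (x^(n-k) / (n-k).factorial)
        = besselU ν k * (x^k * x^(n-k)) / (n-k).factorial := by ring
      _ = x^n * (besselU ν k / (n-k).factorial) := by rw [hxx]; ring
  have hsummand : Summable fun n : ℕ =>
      ∑ k ∈ Finset.range (n+1), (besselU ν k * x^k) * (x^(n-k) / (n-k).factorial) :=
    (summable_norm_sum_mul_range_of_summable_norm hfull hexp).of_norm
  have hU0 : besselU ν 0 = 1 / Real.Gamma (ν + 1) := by
    have := besselU_even ν 0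
    norm_num at this
    simpa using this
  have hΓ1 : 0 < Real.Gamma (ν + 1) := by simpa using gammaPos hν 0
  have h0pos : 0 < ∑ k ∈ Finset.range (0+1), (besselU ν k * x^k) * (x^(0-k) / (0-k).factorial) := by
    rw [hinner 0]
    simp [hU0]
    positivity
  have hge : (∑ k ∈ Finset.range (0+1), (besselU ν k * x^k) * (x^(0-k) / (0-k).factorial))
      ≤ ∑' n : ℕ, ∑ k ∈ Finset.range (n+1), (besselU ν k * x^k) * (x^(n-k) / (n-k).factorial) := by
    apply Summable.le_tsum hsummand 0
    intro j _
    rw [hinner j]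
    exact mul_nonneg (pow_nonneg hx.le j) (besselS_nonneg hν j)
  have hPpos : 0 < (∑' n : ℕ, besselU ν n * x^n) * (∑' n : ℕ, x^n / (n.factorial : ℝ)) := by
    rw [hprod]
    exact lt_of_lt_of_le h0pos hge
  have hExpos : 0 < ∑' n : ℕ, x^n / (n.factorial : ℝ) := by
    have h1 : (1:ℝ) = x^0 / (Nat.factorial 0 : ℝ) := by norm_num
    have := Summable.le_tsum (Real.summable_pow_div_factorial x) 0 (fun j _ => by positivity)
    norm_num at this
    linarith
  have hSpos : 0 < ∑' n : ℕ, besselU ν n * x^n := by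
    by_contra h
    push_neg at h
    nlinarith
  have hfin : 0 < (x/2)^ν * ∑' n : ℕ, besselU ν n * x^n :=
    mul_pos (Real.rpow_pos_of_pos hq ν) hSpos
  rw [gt_iff_lt, ← sub_pos, hdiff]
  exact hfin
end

section
/- For ν > -1/2, the function y(x) = e^{-x} (x/2)^{-ν} I_ν(x) is strictly decreasing on (0, ∞). -/
open Real

namespace BesselAux

noncomputable def dd (ν : ℝ) (k : ℕ) : ℝ := 4 ^ k * Real.Gamma (ν + k + 1) * k.factorial

noncomputable def aa (ν : ℝ) (j : ℕ) : ℝ := if Even j then (dd ν (j / 2))⁻¹ else 0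

noncomputable def AA (ν : ℝ) (m j : ℕ) : ℝ :=
  if j ≤ m then aa ν j * (((m - j).factorial : ℝ))⁻¹ else 0

noncomputable def cc (ν : ℝ) (m : ℕ) : ℝ := ∑ j ∈ Finset.range (m + 1), AA ν m j

variable {ν : ℝ}

lemma nu_add_pos (hν : -1/2 < ν) (k : ℕ) : 0 < ν + k + 1 := by
  have : (0:ℝ) ≤ k := Nat.cast_nonneg k
  linarith

lemma dd_pos (hν : -1/2 < ν) (k : ℕ) : 0 < dd ν k := by
  have h1 := Real.Gamma_pos_of_pos (nu_add_pos hν k)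
  have h2 : (0:ℝ) < (k.factorial : ℝ) := by exact_mod_cast k.factorial_pos
  have h3 : (0:ℝ) < 4 ^ k := by positivity
  exact mul_pos (mul_pos h3 h1) h2

lemma dd_succ (hν : -1/2 < ν) (k : ℕ) : dd ν (k + 1) = 4 * (ν + k + 1) * (k + 1) * dd ν k := by
  unfold dd
  rw [pow_succ, Nat.factorial_succ]
  have h : ν + (k + 1 : ℕ) + 1 = (ν + k + 1) + 1 := by push_cast; ring
  rw [h, Real.Gamma_add_one]
  · push_cast; ring
  · exact (nu_add_pos hν k).ne'

lemma aa_two_mul (k : ℕ) : aa ν (2 * k) = (dd ν k)⁻¹ := by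
  simp [aa, Nat.mul_div_cancel_left k (by norm_num : 0 < 2), even_two_mul k]

lemma aa_odd {j : ℕ} (h : ¬ Even j) : aa ν j = 0 := by simp [aa, h]

lemma aa_nonneg (hν : -1/2 < ν) (j : ℕ) : 0 ≤ aa ν j := by
  unfold aa; split
  · exact (inv_nonneg).2 (dd_pos hν _).le
  · exact le_refl 0

lemma AA_nonneg (hν : -1/2 < ν) (m j : ℕ) : 0 ≤ AA ν m j := by
  unfold AA; split
  · have h2 : (0:ℝ) < ((m - j).factorial : ℝ) := by exact_mod_cast (m - j).factorial_pos
    exact mul_nonneg (aa_nonneg hν j) (by positivity)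
  · exact le_refl 0

lemma cc_pos (hν : -1/2 < ν) (m : ℕ) : 0 < cc ν m := by
  apply Finset.sum_pos' (fun j _ => AA_nonneg hν m j)
  refine ⟨0, Finset.mem_range.2 (Nat.succ_pos m), ?_⟩
  have h1 : AA ν m 0 = (dd ν 0)⁻¹ * ((m.factorial : ℝ))⁻¹ := by
    simp [AA, aa]
  rw [h1]
  have h2 : (0:ℝ) < (m.factorial : ℝ) := by exact_mod_cast m.factorial_pos
  have := dd_pos hν 0
  positivity

lemma cc_nonneg (hν : -1/2 < ν) (m : ℕ) : 0 ≤ cc ν m := (cc_pos hν m).le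


/-- The per-index certificate identity (Zeilberger-style). -/
lemma keyid (hν : -1/2 < ν) (m j : ℕ) :
    ((m:ℝ)+1) * ((m:ℝ)+2*ν+1) * AA ν (m+1) j - (2*(m:ℝ)+2*ν+1) * AA ν m j
      = (j:ℝ)*(2*ν+(j:ℝ)) * AA ν (m+1) j
        - ((j:ℝ)+2)*(2*ν+(j:ℝ)+2) * AA ν (m+1) (j+2) := by
  rcases Nat.even_or_odd j with ⟨k, hk⟩ | hodd
  · -- j = 2k
    subst hk
    have hkk : k + k = 2 * k := by ring
    rw [hkk]
    have hD := dd_pos hν k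
    have hD' := dd_pos hν (k+1)
    have hGk : (0:ℝ) < ν + k + 1 := nu_add_pos hν k
    rcases lt_trichotomy (2*k) m with h | h | h
    · -- main case : 2k+1 ≤ m
      obtain ⟨n, rfl⟩ : ∃ n, m = 2*k+1+n := ⟨m - (2*k+1), by omega⟩
      have e1 : 2*k+1+n+1 - 2*k = n+2 := by omega
      have e2 : 2*k+1+n - 2*k = n+1 := by omega
      have e3 : 2*k+1+n+1 - (2*k+2) = n := by omega
      have l1 : AA ν (2*k+1+n+1) (2*k) = (dd ν k)⁻¹ * (((n+2).factorial : ℝ))⁻¹ := by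
        rw [AA, if_pos (by omega), e1, aa_two_mul]
      have l2 : AA ν (2*k+1+n) (2*k) = (dd ν k)⁻¹ * (((n+1).factorial : ℝ))⁻¹ := by
        rw [AA, if_pos (by omega), e2, aa_two_mul]
      have l3 : AA ν (2*k+1+n+1) (2*k+2) = (dd ν (k+1))⁻¹ * ((n.factorial : ℝ))⁻¹ := by
        have : 2*k+2 = 2*(k+1) := by ring
        rw [AA, if_pos (by omega), e3, this, aa_two_mul]
      rw [l1, l2, l3, dd_succ hν]
      have hf : (0:ℝ) < (n.factorial : ℝ) := by exact_mod_cast n.factorial_pos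
      have hf1 : ((n+1).factorial : ℝ) = ((n:ℝ)+1) * (n.factorial : ℝ) := by
        rw [Nat.factorial_succ]; push_cast; ring
      have hf2 : ((n+2).factorial : ℝ) = ((n:ℝ)+2) * ((n:ℝ)+1) * (n.factorial : ℝ) := by
        rw [Nat.factorial_succ, Nat.factorial_succ]; push_cast; ring
      rw [hf1, hf2]
      push_cast
      field_simp
      ring
    · -- 2k = m
      subst h
      have e1 : 2*k+1 - 2*k = 1 := by omega
      have e2 : 2*k - 2*k = 0 := by omega
      have l1 : AA ν (2*k+1) (2*k) = (dd ν k)⁻¹ := by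
        rw [AA, if_pos (by omega), e1, aa_two_mul]; simp [Nat.factorial]
      have l2 : AA ν (2*k) (2*k) = (dd ν k)⁻¹ := by
        rw [AA, if_pos (by omega), e2, aa_two_mul]; simp [Nat.factorial]
      have l3 : AA ν (2*k+1) (2*k+2) = 0 := by
        rw [AA, if_neg (by omega)]
      rw [l1, l2, l3]
      push_cast
      field_simp
      ring
    · rcases eq_or_lt_of_le (by omega : m + 1 ≤ 2*k) with h2 | h2
      · -- 2k = m+1
        have l1 : AA ν (m+1) (2*k) = (dd ν k)⁻¹ := by
          rw [AA, if_pos (by omega), show m+1-2*k = 0 by omega, aa_two_mul]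
          simp [Nat.factorial]
        have l2 : AA ν m (2*k) = 0 := by rw [AA, if_neg (by omega)]
        have l3 : AA ν (m+1) (2*k+2) = 0 := by rw [AA, if_neg (by omega)]
        rw [l1, l2, l3]
        have hm : (m:ℝ) = 2*(k:ℝ) - 1 := by
          have : (m:ℝ) + 1 = 2*(k:ℝ) := by exact_mod_cast h2
          linarith
        rw [hm]
        push_cast
        ring
      · -- all zero
        have l1 : AA ν (m+1) (2*k) = 0 := by rw [AA, if_neg (by omega)]
        have l2 : AA ν m (2*k) = 0 := by rw [AA, if_neg (by omega)]
        have l3 : AA ν (m+1) (2*k+2) = 0 := by rw [AA, if_neg (by omega)]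
        rw [l1, l2, l3]; ring
  · -- odd j : everything vanishes
    have h1 : aa ν j = 0 := aa_odd (Nat.not_even_iff_odd.mpr hodd)
    have h2 : aa ν (j+2) = 0 := aa_odd (by
      rw [Nat.even_add]; simpa using Nat.not_even_iff_odd.mpr hodd)
    have l1 : ∀ M, AA ν M j = 0 := by intro M; unfold AA; split <;> simp [h1]
    have l2 : ∀ M, AA ν M (j+2) = 0 := by intro M; unfold AA; split <;> simp [h2]
    rw [l1, l1, l2]; ring

lemma recurrence (hν : -1/2 < ν) (m : ℕ) :
    ((m:ℝ)+1) * ((m:ℝ)+2*ν+1) * cc ν (m+1) = (2*(m:ℝ)+2*ν+1) * cc ν m := by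
  have h2 : ∑ j ∈ Finset.range (m + 2), AA ν m j = cc ν m := by
    rw [Finset.sum_range_succ]
    rw [show AA ν m (m+1) = 0 by rw [AA, if_neg (by omega)], add_zero]
    rfl
  rw [show cc ν (m+1) = ∑ j ∈ Finset.range (m + 2), AA ν (m+1) j from rfl, ← h2,
    Finset.mul_sum, Finset.mul_sum, ← sub_eq_zero, ← Finset.sum_sub_distrib]
  set w : ℕ → ℝ := fun j => (j:ℝ)*(2*ν+(j:ℝ)) * AA ν (m+1) j with hw
  have step : ∀ j ∈ Finset.range (m+2),
      ((m:ℝ)+1) * ((m:ℝ)+2*ν+1) * AA ν (m+1) j - (2*(m:ℝ)+2*ν+1) * AA ν m j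
        = (w j - w (j+1)) + (w (j+1) - w (j+2)) := by
    intro j _
    have := keyid hν m j
    rw [hw]
    push_cast
    linarith [keyid hν m j]
  rw [Finset.sum_congr rfl step, Finset.sum_add_distrib,
    Finset.sum_range_sub' w (m+2), Finset.sum_range_sub' (fun j => w (j+1)) (m+2)]
  have w0 : w 0 = 0 := by simp [hw]
  have w1 : w 1 = 0 := by
    have : aa ν 1 = 0 := aa_odd (by simp)
    simp [hw, AA, this]
  have w2 : w (m+2) = 0 := by
    have : AA ν (m+1) (m+2) = 0 := by rw [AA, if_neg (by omega)]
    simp [hw, this]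
  have w3 : w (m+3) = 0 := by
    have : AA ν (m+1) (m+3) = 0 := by rw [AA, if_neg (by omega)]
    simp [hw, this]
  rw [w0, w2] at *
  simp [w1, w3, w0, w2]

lemma step_bound (hν : -1/2 < ν) (m : ℕ) :
    ((m:ℝ)+1) * cc ν (m+1) ≤ 2 * cc ν m := by
  have h := recurrence hν m
  have hp : (0:ℝ) < (m:ℝ)+2*ν+1 := by
    have : (0:ℝ) ≤ m := Nat.cast_nonneg m
    linarith
  have hc := cc_nonneg hν m
  rw [← mul_le_mul_iff_right₀ hp]
  nlinarith [h]

lemma pow_bound (hν : -1/2 < ν) (i j : ℕ) :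
    cc ν (i+j) * ((i+j).factorial : ℝ) ≤ 2^i * (cc ν j * (j.factorial : ℝ)) := by
  induction i with
  | zero => simp
  | succ i ih =>
    have e1 : i + 1 + j = (i + j) + 1 := by omega
    rw [e1]
    have e2 : (((i+j)+1).factorial : ℝ) = (((i+j):ℝ)+1) * ((i+j).factorial : ℝ) := by
      rw [Nat.factorial_succ]; push_cast; ring
    rw [e2]
    have hf : (0:ℝ) ≤ ((i+j).factorial : ℝ) := by positivity
    have sb := step_bound hν (i+j)
    push_cast at sb ⊢
    calc cc ν (i+j+1) * ((↑i + ↑j + 1) * ((i+j).factorial : ℝ))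
        = ((↑i + ↑j + 1) * cc ν (i+j+1)) * ((i+j).factorial : ℝ) := by ring
      _ ≤ (2 * cc ν (i+j)) * ((i+j).factorial : ℝ) :=
          mul_le_mul_of_nonneg_right sb hf
      _ = 2 * (cc ν (i+j) * ((i+j).factorial : ℝ)) := by ring
      _ ≤ 2 * (2^i * (cc ν j * (j.factorial : ℝ))) := by linarith
      _ = 2^(i+1) * (cc ν j * (j.factorial : ℝ)) := by ring

lemma cc_one : cc ν 1 = cc ν 0 := by
  have h1 : aa ν 1 = 0 := aa_odd (by simp)
  simp [cc, AA, Finset.sum_range_succ, h1, Nat.factorial]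

lemma summable_norm_g (hν : -1/2 < ν) (x : ℝ) :
    Summable (fun k => ‖x^(2*k) * (dd ν k)⁻¹‖) := by
  apply summable_of_ratio_norm_eventually_le (r := 1/2) (by norm_num)
  rw [Filter.eventually_atTop]
  refine ⟨⌈x^2⌉₊, fun k hk => ?_⟩
  have hxk : x^2 ≤ (k:ℝ) + 1 := by
    have h1 : x^2 ≤ (⌈x^2⌉₊ : ℝ) := Nat.le_ceil _
    have h2 : ((⌈x^2⌉₊:ℕ):ℝ) ≤ (k:ℝ) := by exact_mod_cast hk
    linarith
  have hD := dd_pos hν k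
  have hGk := nu_add_pos hν k
  have hC : (0:ℝ) < 4*(ν+(k:ℝ)+1)*((k:ℝ)+1) := by positivity
  simp only [norm_norm, Real.norm_eq_abs, abs_mul, abs_inv, abs_of_pos hD,
    abs_of_pos (dd_pos hν (k+1)), abs_pow, abs_abs]
  rw [dd_succ hν k]
  have h2 : |x|^(2*(k+1)) = |x|^(2*k) * x^2 := by
    rw [show 2*(k+1) = 2*k + 2 by ring, pow_add, sq_abs]
  have base : x^2 * (4*(ν+(k:ℝ)+1)*((k:ℝ)+1))⁻¹ ≤ 1/2 := by
    rw [mul_inv_le_iff₀ hC]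
    nlinarith [hxk, Nat.cast_nonneg (α := ℝ) k, hν]
  have hnn : (0:ℝ) ≤ |x|^(2*k) * (dd ν k)⁻¹ := by positivity
  calc |x|^(2*(k+1)) * (4*(ν+(k:ℝ)+1)*((k:ℝ)+1) * dd ν k)⁻¹
      = (|x|^(2*k) * (dd ν k)⁻¹) * (x^2 * (4*(ν+(k:ℝ)+1)*((k:ℝ)+1))⁻¹) := by
        rw [h2, mul_inv]; ring
    _ ≤ (|x|^(2*k) * (dd ν k)⁻¹) * (1/2) := by
        exact mul_le_mul_of_nonneg_left base hnn
    _ = 1/2 * (|x|^(2*k) * (dd ν k)⁻¹) := by ring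

lemma two_mul_injective : Function.Injective (fun k : ℕ => 2 * k) :=
  fun a b h => by dsimp at h; omega

lemma aa_support {x : ℝ} {j : ℕ} (hj : j ∉ Set.range (fun k : ℕ => 2 * k)) :
    aa ν j * x^j = 0 := by
  have : ¬ Even j := by
    intro ⟨r, hr⟩
    exact hj ⟨r, by dsimp; omega⟩
  rw [aa_odd this, zero_mul]

lemma summable_norm_aa (hν : -1/2 < ν) (x : ℝ) :
    Summable (fun j => ‖aa ν j * x^j‖) := by
  rw [← Function.Injective.summable_iff two_mul_injective
    (fun j hj => by rw [aa_support hj, norm_zero])]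
  have : (fun j => ‖aa ν j * x^j‖) ∘ (fun k : ℕ => 2 * k)
      = fun k => ‖x^(2*k) * (dd ν k)⁻¹‖ := by
    funext k
    show ‖aa ν (2*k) * x^(2*k)‖ = ‖x^(2*k) * (dd ν k)⁻¹‖
    rw [aa_two_mul, mul_comm]
  rw [this]
  exact summable_norm_g hν x

lemma tsum_g_eq (x : ℝ) :
    ∑' k : ℕ, x^(2*k) * (dd ν k)⁻¹ = ∑' j : ℕ, aa ν j * x^j := by
  rw [← Function.Injective.tsum_eq two_mul_injective
    (f := fun j => aa ν j * x^j)
    (fun j hj => by by_contra h; exact hj (aa_support h))]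
  exact tsum_congr fun k => by
    show x^(2*k) * (dd ν k)⁻¹ = aa ν (2*k) * x^(2*k)
    rw [aa_two_mul, mul_comm]

lemma summable_norm_exp (x : ℝ) : Summable (fun i : ℕ => ‖x^i / (i.factorial : ℝ)‖) := by
  have : (fun i : ℕ => ‖x^i / (i.factorial : ℝ)‖) = fun i => |x|^i / (i.factorial : ℝ) := by
    funext i
    rw [Real.norm_eq_abs, abs_div, abs_pow, abs_of_pos (by positivity : (0:ℝ) < (i.factorial : ℝ))]
  rw [this]
  exact Real.summable_pow_div_factorial |x|

lemma antidiag_sum (m : ℕ) (x : ℝ) :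
    ∑ p ∈ Finset.HasAntidiagonal.antidiagonal m, (x^p.1 / (p.1.factorial : ℝ)) * (aa ν p.2 * x^p.2)
      = cc ν m * x^m := by
  rw [Finset.Nat.sum_antidiagonal_eq_sum_range_succ_mk]
  rw [cc, Finset.sum_mul]
  rw [← Finset.sum_range_reflect]
  apply Finset.sum_congr rfl
  intro j hj
  have hjm : j ≤ m := by
    have := Finset.mem_range.1 hj; omega
  have e0 : m + 1 - 1 - j = m - j := by omega
  rw [e0]
  have e1 : m - (m - j) = j := Nat.sub_sub_self hjm
  rw [e1]
  have e2 : x^(m-j) * x^j = x^m := by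
    rw [← pow_add]
    congr 1
    omega
  rw [AA, if_pos hjm]
  field_simp
  linear_combination (aa ν j) * e2

lemma expMul (hν : -1/2 < ν) (x : ℝ) :
    Real.exp x * (∑' j : ℕ, aa ν j * x^j) = ∑' m : ℕ, cc ν m * x^m := by
  rw [Real.exp_eq_exp_ℝ, NormedSpace.exp_eq_tsum_div]
  rw [tsum_mul_tsum_eq_tsum_sum_antidiagonal_of_summable_norm
    (summable_norm_exp x) (summable_norm_aa hν x)]
  exact tsum_congr fun m => antidiag_sum m x

lemma summable_norm_cc (hν : -1/2 < ν) (x : ℝ) :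
    Summable (fun m => ‖cc ν m * x^m‖) := by
  have h := summable_norm_sum_mul_antidiagonal_of_summable_norm
    (f := fun i : ℕ => x^i / (i.factorial : ℝ)) (g := fun j => aa ν j * x^j)
    (summable_norm_exp x) (summable_norm_aa hν x)
  have e : (fun n => ‖∑ kl ∈ Finset.HasAntidiagonal.antidiagonal n,
      (x^kl.1 / (kl.1.factorial : ℝ)) * (aa ν kl.2 * x^kl.2)‖) = fun m => ‖cc ν m * x^m‖ := by
    funext n
    rw [antidiag_sum]
  rwa [e] at h

lemma summable_cc (hν : -1/2 < ν) (x : ℝ) :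
    Summable (fun m => cc ν m * x^m) :=
  (summable_norm_cc hν x).of_norm

lemma link (hν : -1/2 < ν) {x : ℝ} (hx : 0 < x) :
    Real.exp (-x) * (x/2)^(-ν) * besselI ν x
      = Real.exp (-(2*x)) * ∑' m : ℕ, cc ν m * x^m := by
  have hx2 : (0:ℝ) < x/2 := by linarith
  have hA : (x/2)^(-ν) * besselI ν x = ∑' k : ℕ, x^(2*k) * (dd ν k)⁻¹ := by
    rw [besselI, ← tsum_mul_left]
    apply tsum_congr
    intro k
    have hg := (Real.Gamma_pos_of_pos (nu_add_pos hν k)).ne'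
    have hfk : ((k.factorial:ℝ)) ≠ 0 := by positivity
    have h1 : (x/2)^(-ν) * (x/2)^(ν + 2*(k:ℝ)) = (x/2)^(2*k : ℕ) := by
      rw [← Real.rpow_natCast (x/2) (2*k), ← Real.rpow_add hx2]
      congr 1
      push_cast
      ring
    rw [← mul_div_assoc, h1]
    have h2 : (x/2)^(2*k:ℕ) = x^(2*k) / 4^k := by
      rw [div_pow]
      congr 1
      rw [pow_mul]
      norm_num
    rw [h2, dd]
    have h4 : ((4:ℝ))^k ≠ 0 := by positivity
    field_simp
  calc Real.exp (-x) * (x/2)^(-ν) * besselI ν x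
      = Real.exp (-x) * ((x/2)^(-ν) * besselI ν x) := by ring
    _ = Real.exp (-x) * ∑' j : ℕ, aa ν j * x^j := by rw [hA, tsum_g_eq]
    _ = Real.exp (-(2*x)) * (Real.exp x * ∑' j : ℕ, aa ν j * x^j) := by
        rw [← mul_assoc, ← Real.exp_add, show -(2*x) + x = -x by ring]
    _ = Real.exp (-(2*x)) * ∑' m : ℕ, cc ν m * x^m := by rw [expMul hν x]

lemma perm_bound (hν : -1/2 < ν) {a t : ℝ} (ha : 0 < a) (ht : 0 < t) (m : ℕ) :
    cc ν m * (a + t)^m ≤ ∑ p ∈ Finset.HasAntidiagonal.antidiagonal m,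
      ((2*t)^p.1 / (p.1.factorial : ℝ)) * (cc ν p.2 * a^p.2) := by
  rw [Finset.Nat.sum_antidiagonal_eq_sum_range_succ_mk]
  rw [add_comm a t, add_pow, Finset.mul_sum]
  apply Finset.sum_le_sum
  intro i hi
  have him : i ≤ m := by have := Finset.mem_range.1 hi; omega
  set j := m - i with hj
  have hij : i + j = m := by omega
  have hfi : (0:ℝ) < (i.factorial : ℝ) := by exact_mod_cast i.factorial_pos
  have hfj : (0:ℝ) < (j.factorial : ℝ) := by exact_mod_cast j.factorial_pos
  have hchoose : ((m.choose i : ℕ) : ℝ) * (i.factorial:ℝ) * (j.factorial:ℝ) = (m.factorial:ℝ) := by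
    exact_mod_cast Nat.choose_mul_factorial_mul_factorial him
  have pb := pow_bound hν i j
  rw [hij] at pb
  have h3 : (cc ν m * (m.choose i : ℝ) * (i.factorial:ℝ)) * (j.factorial:ℝ)
      = cc ν m * (m.factorial:ℝ) := by rw [← hchoose]; ring
  have h4 : (cc ν m * (m.choose i : ℝ) * (i.factorial:ℝ)) * (j.factorial:ℝ)
      ≤ (2^i * cc ν j) * (j.factorial:ℝ) := by
    rw [h3]
    have : (2:ℝ)^i * (cc ν j * (j.factorial:ℝ)) = (2^i * cc ν j) * (j.factorial:ℝ) := by ring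
    linarith [pb]
  have key' : cc ν m * (m.choose i : ℝ) * (i.factorial:ℝ) ≤ 2^i * cc ν j :=
    le_of_mul_le_mul_right h4 hfj
  have key : cc ν m * (m.choose i : ℝ) ≤ 2^i * cc ν j / (i.factorial:ℝ) := by
    rw [le_div_iff₀ hfi]
    exact key'
  have hpos : (0:ℝ) ≤ t^i * a^j := by positivity
  calc cc ν m * (t^i * a^(m-i) * (m.choose i : ℝ))
      = (cc ν m * (m.choose i : ℝ)) * (t^i * a^j) := by rw [← hj]; ring
    _ ≤ (2^i * cc ν j / (i.factorial:ℝ)) * (t^i * a^j) :=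
        mul_le_mul_of_nonneg_right key hpos
    _ = (2*t)^i / (i.factorial:ℝ) * (cc ν j * a^j) := by rw [mul_pow]; ring

lemma main_ineq (hν : -1/2 < ν) {a t : ℝ} (ha : 0 < a) (ht : 0 < t) :
    ∑' m : ℕ, cc ν m * (a + t)^m < Real.exp (2*t) * ∑' m : ℕ, cc ν m * a^m := by
  rw [Real.exp_eq_exp_ℝ, NormedSpace.exp_eq_tsum_div]
  rw [tsum_mul_tsum_eq_tsum_sum_antidiagonal_of_summable_norm
    (summable_norm_exp (2*t)) (summable_norm_cc hν a)]
  apply Summable.tsum_lt_tsum_of_nonneg (i := 1)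
  · intro m
    have := cc_nonneg hν m
    positivity
  · exact perm_bound hν ha ht
  · -- strict at m = 1
    rw [Finset.Nat.sum_antidiagonal_eq_sum_range_succ_mk]
    rw [Finset.sum_range_succ, Finset.sum_range_one]
    simp only [pow_zero, pow_one, Nat.factorial]
    rw [cc_one]
    have h0 := cc_pos hν 0
    push_cast
    nlinarith [h0, ht]
  · apply Summable.of_norm
    have h := summable_norm_sum_mul_antidiagonal_of_summable_norm
      (f := fun i : ℕ => (2*t)^i / (i.factorial : ℝ)) (g := fun j => cc ν j * a^j)
      (summable_norm_exp (2*t)) (summable_norm_cc hν a)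
    exact h

end BesselAux

theorem strictAntiOn_exp_neg_mul_besselI {ν : ℝ} (hν : -1/2 < ν) :
    StrictAntiOn (fun x : ℝ => Real.exp (-x) * (x / 2) ^ (-ν) * besselI ν x)
      (Set.Ioi (0 : ℝ)) := by
  intro a ha b hb hab
  simp only [Set.mem_Ioi] at ha hb
  show Real.exp (-b) * (b / 2) ^ (-ν) * besselI ν b
      < Real.exp (-a) * (a / 2) ^ (-ν) * besselI ν a
  rw [BesselAux.link hν hb, BesselAux.link hν ha]
  have key := BesselAux.main_ineq (a := a) (t := b - a) hν ha (by linarith)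
  rw [show a + (b-a) = b by ring] at key
  have h1 : (0:ℝ) < Real.exp (-(2*b)) := Real.exp_pos _
  calc Real.exp (-(2*b)) * ∑' m : ℕ, BesselAux.cc ν m * b^m
      < Real.exp (-(2*b)) * (Real.exp (2*(b-a)) * ∑' m : ℕ, BesselAux.cc ν m * a^m) :=
        mul_lt_mul_of_pos_left key h1
    _ = Real.exp (-(2*a)) * ∑' m : ℕ, BesselAux.cc ν m * a^m := by
        rw [← mul_assoc, ← Real.exp_add, show -(2*b) + 2*(b-a) = -(2*a) by ring]
end

section
/- For ν > 1/2, the function y(x) = x^ν e^x K_ν(x) is strictly increasing on (0, ∞). -/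
open Real

/-- Modified Bessel function of the second kind (Macdonald function), via its
integral representation for positive argument. -/
noncomputable def besselK (ν x : ℝ) : ℝ :=
  ∫ t in Set.Ioi (0 : ℝ), Real.exp (-x * Real.cosh t) * Real.cosh (ν * t)

open MeasureTheory Set Filter Topology Asymptotics
open scoped ENNReal

lemma cosh_le_exp_abs (t : ℝ) : Real.cosh t ≤ Real.exp |t| := by
  rw [Real.cosh_eq]
  have h1 : Real.exp t ≤ Real.exp |t| := Real.exp_le_exp.2 (le_abs_self t)
  have h2 : Real.exp (-t) ≤ Real.exp |t| := Real.exp_le_exp.2 (neg_le_abs t)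
  linarith

lemma half_exp_le_cosh (t : ℝ) : Real.exp t / 2 ≤ Real.cosh t := by
  rw [Real.cosh_eq]; have := (Real.exp_pos (-t)).le; linarith

lemma tendsto_aux {x : ℝ} (hx : 0 < x) (M : ℝ) :
    Tendsto (fun t : ℝ => M * t - x * Real.cosh t) atTop atBot := by
  have h1 : Tendsto (fun t : ℝ => M * t - x / 2 * Real.exp t) atTop atBot := by
    have he : (fun t : ℝ => M * t - x / 2 * Real.exp t)
        = fun t => (M * (t ^ 1 * Real.exp (-t)) - x / 2) * Real.exp t := by
      funext t; rw [Real.exp_neg]; have := (Real.exp_pos t).ne'; field_simp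
    rw [he]
    have hl : Tendsto (fun t : ℝ => M * (t ^ 1 * Real.exp (-t)) - x / 2) atTop
        (𝓝 (M * 0 - x / 2)) :=
      ((tendsto_pow_mul_exp_neg_atTop_nhds_zero 1).const_mul M).sub_const _
    have : M * 0 - x / 2 < 0 := by linarith
    exact hl.neg_mul_atTop this Real.tendsto_exp_atTop
  refine tendsto_atBot_mono (fun t => ?_) h1
  have := half_exp_le_cosh t
  nlinarith

lemma tendsto_exp_aux {x : ℝ} (hx : 0 < x) (M : ℝ) :
    Tendsto (fun t : ℝ => Real.exp (M * t - x * Real.cosh t)) atTop (𝓝 0) :=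
  Real.tendsto_exp_atBot.comp (tendsto_aux hx M)

lemma integrableOn_aux {x : ℝ} (hx : 0 < x) (M : ℝ) :
    IntegrableOn (fun t : ℝ => Real.exp (M * t - x * Real.cosh t)) (Ioi 0) := by
  refine integrable_of_isBigO_exp_neg one_pos (Continuous.continuousOn (by fun_prop)) ?_
  have h : Tendsto (fun t : ℝ => Real.exp (M * t - x * Real.cosh t) / Real.exp (-1 * t))
      atTop (𝓝 0) := by
    have : ∀ t : ℝ, Real.exp (M * t - x * Real.cosh t) / Real.exp (-1 * t)
        = Real.exp ((M + 1) * t - x * Real.cosh t) := by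
      intro t; rw [← Real.exp_sub]; ring_nf
    simp only [this]
    exact tendsto_exp_aux hx (M + 1)
  have := (isLittleO_iff_tendsto (fun t ht => absurd ht (Real.exp_ne_zero _))).2 h
  exact this.isBigO

lemma integrableOn_kernel {x : ℝ} (hx : 0 < x) (a : ℝ) :
    IntegrableOn (fun t : ℝ => Real.exp (-x * Real.cosh t) * Real.cosh (a * t)) (Ioi 0) := by
  have hc : Continuous (fun t : ℝ => Real.exp (-x * Real.cosh t) * Real.cosh (a * t)) :=
    (Real.continuous_exp.comp ((continuous_const.mul Real.continuous_cosh))).mul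
      (Real.continuous_cosh.comp (continuous_const.mul continuous_id))
  refine MeasureTheory.Integrable.mono (integrableOn_aux hx |a|) hc.aestronglyMeasurable ?_
  rw [ae_restrict_iff' measurableSet_Ioi]
  filter_upwards with t ht
  have ht' : 0 < t := ht
  have h1 : Real.cosh (a * t) ≤ Real.exp (|a| * t) := by
    calc Real.cosh (a * t) ≤ Real.exp |a * t| := cosh_le_exp_abs _
    _ = Real.exp (|a| * t) := by rw [abs_mul, abs_of_pos ht']
  have h2 : (0:ℝ) < Real.cosh (a * t) := Real.cosh_pos _
  rw [Real.norm_eq_abs, Real.norm_eq_abs, abs_of_pos (by positivity),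
    abs_of_pos (Real.exp_pos _)]
  calc Real.exp (-x * Real.cosh t) * Real.cosh (a * t)
      ≤ Real.exp (-x * Real.cosh t) * Real.exp (|a| * t) := by
        exact mul_le_mul_of_nonneg_left h1 (Real.exp_pos _).le
    _ = Real.exp (-x * Real.cosh t + |a| * t) := by rw [← Real.exp_add]
    _ ≤ Real.exp (|a| * t - x * Real.cosh t) := by apply Real.exp_le_exp.2; ring_nf; rfl

lemma integrableOn_kernel_cosh {x : ℝ} (hx : 0 < x) (a : ℝ) :
    IntegrableOn (fun t : ℝ => Real.cosh t * (Real.exp (-x * Real.cosh t) * Real.cosh (a * t)))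
      (Ioi 0) := by
  have hc : Continuous (fun t : ℝ =>
      Real.cosh t * (Real.exp (-x * Real.cosh t) * Real.cosh (a * t))) :=
    Real.continuous_cosh.mul
      ((Real.continuous_exp.comp (continuous_const.mul Real.continuous_cosh)).mul
        (Real.continuous_cosh.comp (continuous_const.mul continuous_id)))
  refine MeasureTheory.Integrable.mono (integrableOn_aux hx (1 + |a|))
    hc.aestronglyMeasurable ?_
  rw [ae_restrict_iff' measurableSet_Ioi]
  filter_upwards with t ht
  have ht' : 0 < t := ht
  have h1 : Real.cosh (a * t) ≤ Real.exp (|a| * t) := by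
    calc Real.cosh (a * t) ≤ Real.exp |a * t| := cosh_le_exp_abs _
    _ = Real.exp (|a| * t) := by rw [abs_mul, abs_of_pos ht']
  have h0 : Real.cosh t ≤ Real.exp t := by
    calc Real.cosh t ≤ Real.exp |t| := cosh_le_exp_abs _
    _ = Real.exp t := by rw [abs_of_pos ht']
  have h2 : (0:ℝ) < Real.cosh (a * t) := Real.cosh_pos _
  have h3 : (0:ℝ) < Real.cosh t := Real.cosh_pos _
  rw [Real.norm_eq_abs, Real.norm_eq_abs, abs_of_pos (by positivity),
    abs_of_pos (Real.exp_pos _)]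
  calc Real.cosh t * (Real.exp (-x * Real.cosh t) * Real.cosh (a * t))
      ≤ Real.exp t * (Real.exp (-x * Real.cosh t) * Real.exp (|a| * t)) := by
        apply mul_le_mul h0 (mul_le_mul_of_nonneg_left h1 (Real.exp_pos _).le)
          (by positivity) (Real.exp_pos _).le
    _ = Real.exp ((1 + |a|) * t - x * Real.cosh t) := by
        rw [← Real.exp_add, ← Real.exp_add]; ring_nf

lemma abs_sinh_le_cosh (y : ℝ) : |Real.sinh y| ≤ Real.cosh y := by
  rw [abs_le, Real.sinh_eq, Real.cosh_eq]
  constructor <;> [have := (Real.exp_pos y).le; have := (Real.exp_pos (-y)).le] <;> nlinarith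

lemma ibp {ν x : ℝ} (hx : 0 < x) :
    (∫ t in Ioi (0:ℝ), Real.cosh t * (Real.exp (-x * Real.cosh t) * Real.cosh (ν * t)))
      = (ν / x) * besselK ν x + besselK (ν - 1) x := by
  set F : ℝ → ℝ := fun t => (1/x) * (Real.exp (-x * Real.cosh t) * Real.sinh (ν * t)) with hF
  set G : ℝ → ℝ := fun t => (ν/x) * (Real.exp (-x * Real.cosh t) * Real.cosh (ν * t))
      - Real.cosh t * (Real.exp (-x * Real.cosh t) * Real.cosh (ν * t))
      + Real.exp (-x * Real.cosh t) * Real.cosh ((ν - 1) * t) with hG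
  have hFc : Continuous F := by
    exact continuous_const.mul
      ((Real.continuous_exp.comp (continuous_const.mul Real.continuous_cosh)).mul
        (Real.continuous_sinh.comp (continuous_const.mul continuous_id)))
  have hderiv : ∀ t ∈ Ioi (0:ℝ), HasDerivAt F (G t) t := by
    intro t _
    have h2 : HasDerivAt (fun t : ℝ => Real.exp (-x * Real.cosh t))
        (Real.exp (-x * Real.cosh t) * (-x * Real.sinh t)) t :=
      (((Real.hasDerivAt_cosh t).const_mul (-x)).exp)
    have h3 : HasDerivAt (fun t : ℝ => Real.sinh (ν * t)) (Real.cosh (ν * t) * ν) t := by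
      simpa using ((hasDerivAt_id t).const_mul ν).sinh
    have h4 := (h2.mul h3).const_mul (1/x)
    refine h4.congr_deriv ?_
    have hid : Real.cosh ((ν - 1) * t)
        = Real.cosh (ν * t) * Real.cosh t - Real.sinh (ν * t) * Real.sinh t := by
      have : (ν - 1) * t = ν * t - t := by ring
      rw [this, Real.cosh_sub]
    simp only [hG, hid]
    field_simp
    ring
  have hlim : Tendsto F atTop (𝓝 0) := by
    have hb : Tendsto (fun t : ℝ => (1/x) * Real.exp (|ν| * t - x * Real.cosh t)) atTop
        (𝓝 ((1/x) * 0)) := (tendsto_exp_aux hx |ν|).const_mul (1/x)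
    rw [mul_zero] at hb
    refine squeeze_zero_norm' ?_ hb
    filter_upwards [eventually_ge_atTop (0:ℝ)] with t ht
    have h1 : |Real.sinh (ν * t)| ≤ Real.exp (|ν| * t) := by
      calc |Real.sinh (ν * t)| ≤ Real.cosh (ν * t) := abs_sinh_le_cosh _
      _ ≤ Real.exp |ν * t| := cosh_le_exp_abs _
      _ = Real.exp (|ν| * t) := by rw [abs_mul, abs_of_nonneg ht]
    simp only [hF, Real.norm_eq_abs]
    rw [abs_mul, abs_mul, abs_of_pos (Real.exp_pos _), abs_of_pos (by positivity : (0:ℝ) < 1/x)]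
    have hkey : Real.exp (-x * Real.cosh t) * |Real.sinh (ν * t)|
        ≤ Real.exp (|ν| * t - x * Real.cosh t) := by
      calc Real.exp (-x * Real.cosh t) * |Real.sinh (ν * t)|
          ≤ Real.exp (-x * Real.cosh t) * Real.exp (|ν| * t) :=
            mul_le_mul_of_nonneg_left h1 (Real.exp_pos _).le
        _ = Real.exp (|ν| * t - x * Real.cosh t) := by rw [← Real.exp_add]; ring_nf
    exact mul_le_mul_of_nonneg_left hkey (by positivity)
  have hGint : IntegrableOn G (Ioi 0) :=
    (((integrableOn_kernel hx ν).const_mul (ν/x)).sub (integrableOn_kernel_cosh hx ν)).add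
      (integrableOn_kernel hx (ν - 1))
  have h0 : ∫ t in Ioi (0:ℝ), G t = 0 - F 0 :=
    MeasureTheory.integral_Ioi_of_hasDerivAt_of_tendsto
      (hFc.continuousAt.continuousWithinAt) hderiv hGint hlim
  have hF0 : F 0 = 0 := by simp [hF]
  rw [hF0, sub_zero] at h0
  have hsplit : ∫ t in Ioi (0:ℝ), G t
      = (ν/x) * besselK ν x
        - (∫ t in Ioi (0:ℝ), Real.cosh t * (Real.exp (-x * Real.cosh t) * Real.cosh (ν * t)))
        + besselK (ν - 1) x := by
    have i1 : IntegrableOn (fun t : ℝ => (ν/x) * (Real.exp (-x * Real.cosh t) * Real.cosh (ν * t))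
        - Real.cosh t * (Real.exp (-x * Real.cosh t) * Real.cosh (ν * t))) (Ioi 0) := by
      exact ((integrableOn_kernel hx ν).const_mul (ν/x)).sub (integrableOn_kernel_cosh hx ν)
    have i2 : IntegrableOn (fun t : ℝ => (ν/x) * (Real.exp (-x * Real.cosh t) * Real.cosh (ν * t)))
        (Ioi 0) := by exact (integrableOn_kernel hx ν).const_mul (ν/x)
    rw [hG]
    beta_reduce
    rw [MeasureTheory.integral_add i1 (integrableOn_kernel hx (ν - 1)),
      MeasureTheory.integral_sub i2 (integrableOn_kernel_cosh hx ν),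
      MeasureTheory.integral_const_mul]
    rfl
  rw [hsplit] at h0
  linarith

lemma hasDerivAt_besselK {ν x : ℝ} (hx : 0 < x) :
    HasDerivAt (besselK ν)
      (-∫ t in Ioi (0:ℝ), Real.cosh t * (Real.exp (-x * Real.cosh t) * Real.cosh (ν * t))) x := by
  have key := hasDerivAt_integral_of_dominated_loc_of_deriv_le (𝕜 := ℝ) (s := Metric.ball x (x/2)) (x₀ := x)
    (F := fun y t => Real.exp (-y * Real.cosh t) * Real.cosh (ν * t))
    (F' := fun y t => -(Real.cosh t * (Real.exp (-y * Real.cosh t) * Real.cosh (ν * t))))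
    (bound := fun t => Real.cosh t * (Real.exp (-(x/2) * Real.cosh t) * Real.cosh (ν * t)))
    (μ := volume.restrict (Ioi 0)) (Metric.ball_mem_nhds x (half_pos hx))
    ?_ (integrableOn_kernel hx ν) ?_ ?_ (integrableOn_kernel_cosh (half_pos hx) ν) ?_
  · have := key.2
    rw [MeasureTheory.integral_neg] at this
    exact this
  · filter_upwards with y
    exact ((Real.continuous_exp.comp (continuous_const.mul Real.continuous_cosh)).mul
      (Real.continuous_cosh.comp (continuous_const.mul continuous_id))).aestronglyMeasurable
  · exact (Real.continuous_cosh.mul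
      ((Real.continuous_exp.comp (continuous_const.mul Real.continuous_cosh)).mul
        (Real.continuous_cosh.comp (continuous_const.mul continuous_id)))).neg.aestronglyMeasurable
  · filter_upwards with t
    intro y hy
    rw [Metric.mem_ball, Real.dist_eq, abs_lt] at hy
    have hy2 : x/2 ≤ y := by linarith [hy.1]
    have hch : (0:ℝ) < Real.cosh t := Real.cosh_pos _
    have hch2 : (0:ℝ) < Real.cosh (ν * t) := Real.cosh_pos _
    rw [norm_neg, Real.norm_eq_abs, abs_of_pos (by positivity)]
    have : Real.exp (-y * Real.cosh t) ≤ Real.exp (-(x/2) * Real.cosh t) := by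
      apply Real.exp_le_exp.2; nlinarith
    exact mul_le_mul_of_nonneg_left (mul_le_mul_of_nonneg_right this hch2.le) hch.le
  · filter_upwards with t
    intro y hy
    have h1 : HasDerivAt (fun y : ℝ => -y * Real.cosh t) (-Real.cosh t) y := by
      simpa using ((hasDerivAt_id y).neg.mul_const (Real.cosh t))
    have h2 := (h1.exp).mul_const (Real.cosh (ν * t))
    refine h2.congr_deriv ?_
    ring

theorem strictMonoOn_rpow_exp_besselK {ν : ℝ} (hν : 1/2 < ν) :
    StrictMonoOn (fun x : ℝ => x ^ ν * Real.exp x * besselK ν x)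
      (Set.Ioi (0 : ℝ)) := by
  have key : ∀ x ∈ Ioi (0:ℝ), HasDerivAt (fun x : ℝ => x ^ ν * Real.exp x * besselK ν x)
      (x ^ ν * Real.exp x * (besselK ν x - besselK (ν - 1) x)) x := by
    intro x hx
    have hx : (0:ℝ) < x := hx
    have h1 : HasDerivAt (fun x : ℝ => x ^ ν * Real.exp x)
        (ν * x ^ (ν - 1) * Real.exp x + x ^ ν * Real.exp x) x := by
      have ha := Real.hasDerivAt_rpow_const (x := x) (p := ν) (Or.inl hx.ne')
      exact ha.mul (Real.hasDerivAt_exp x)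
    have h3 := h1.mul (hasDerivAt_besselK (ν := ν) hx)
    refine HasDerivAt.congr_deriv h3 ?_
    rw [ibp hx]
    have hxν : x ^ ν = x ^ (ν - 1) * x := by
      rw [← Real.rpow_add_one hx.ne' (ν - 1), sub_add_cancel]
    rw [hxν]
    field_simp
    ring
  have pos : ∀ x ∈ Ioi (0:ℝ), 0 < besselK ν x - besselK (ν - 1) x := by
    intro x hx
    have hx : (0:ℝ) < x := hx
    rw [besselK, besselK, ← MeasureTheory.integral_sub (integrableOn_kernel hx ν)
      (integrableOn_kernel hx (ν - 1))]
    set f : ℝ → ℝ := fun t => Real.exp (-x * Real.cosh t) * Real.cosh (ν * t)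
      - Real.exp (-x * Real.cosh t) * Real.cosh ((ν - 1) * t) with hf
    have hfpos : ∀ t ∈ Ioi (0:ℝ), 0 < f t := by
      intro t ht
      have ht' : (0:ℝ) < t := ht
      have hcc : Real.cosh ((ν - 1) * t) < Real.cosh (ν * t) := by
        rw [Real.cosh_lt_cosh, abs_mul, abs_mul, abs_of_pos ht']
        have h1 : |ν - 1| < |ν| := by
          rw [abs_of_pos (by linarith : (0:ℝ) < ν), abs_lt]
          constructor <;> linarith
        exact mul_lt_mul_of_pos_right h1 ht'
      show (0:ℝ) < Real.exp (-x * Real.cosh t) * Real.cosh (ν * t)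
        - Real.exp (-x * Real.cosh t) * Real.cosh ((ν - 1) * t)
      have := Real.exp_pos (-x * Real.cosh t)
      nlinarith
    rw [MeasureTheory.setIntegral_pos_iff_support_of_nonneg_ae]
    · have hsub : Ioi (0:ℝ) ⊆ Function.support f ∩ Ioi 0 := fun t ht =>
        ⟨ne_of_gt (hfpos t ht), ht⟩
      calc (0:ℝ≥0∞) < volume (Ioi (0:ℝ)) := by
            rw [Real.volume_Ioi]; exact ENNReal.zero_lt_top
        _ ≤ _ := measure_mono hsub
    · rw [EventuallyLE, ae_restrict_iff' measurableSet_Ioi]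
      filter_upwards with t ht
      exact (hfpos t ht).le
    · exact (integrableOn_kernel hx ν).sub (integrableOn_kernel hx (ν - 1))
  refine strictMonoOn_of_deriv_pos (convex_Ioi 0)
    (fun x hx => (key x hx).continuousAt.continuousWithinAt) ?_
  intro x hx
  rw [interior_Ioi] at hx
  rw [(key x hx).deriv]
  have h0 : (0:ℝ) < x := hx
  exact mul_pos (mul_pos (Real.rpow_pos_of_pos h0 ν) (Real.exp_pos x)) (pos x hx)
end

section
/- For ν > -1/2, the function ψ(x) = x - log(Γ(1+ν) I_ν(x)/(x/2)^ν) satisfies ψ(0) = 0, ψ is strictly increasing on (0,∞), and ψ(x) → ∞ as x → ∞. -/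
open Real Filter

/-- The phase function `ψ(x) = x - log(Γ(1+ν) I_ν(x)/(x/2)^ν)`, written using the
normalised (entire) series `Γ(1+ν) I_ν(x)/(x/2)^ν = Σ_{k≥0} (x/2)^{2k}/((1+ν)_k k!)`. -/
noncomputable def psiI (ν x : ℝ) : ℝ :=
  x - Real.log (∑' k : ℕ,
    (x / 2) ^ (2 * k) / ((Real.Gamma (1 + ν + k) / Real.Gamma (1 + ν)) * k.factorial))

namespace PsiAux

noncomputable def D (ν : ℝ) (k : ℕ) : ℝ :=
  (Real.Gamma (1 + ν + k) / Real.Gamma (1 + ν)) * k.factorial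

noncomputable def t (ν : ℝ) (k : ℕ) (x : ℝ) : ℝ := (x / 2) ^ (2 * k) / D ν k

noncomputable def t1 (ν : ℝ) (k : ℕ) (x : ℝ) : ℝ :=
  ((2 * k : ℕ) : ℝ) * (x / 2) ^ (2 * k - 1) * (1 / 2) / D ν k

noncomputable def t2 (ν : ℝ) (k : ℕ) (x : ℝ) : ℝ :=
  ((2 * k : ℕ) : ℝ) * ((2 * k - 1 : ℕ) : ℝ) * (x / 2) ^ (2 * k - 1 - 1) * (1 / 4) / D ν k

lemma t_hasDeriv (ν : ℝ) (k : ℕ) (x : ℝ) : HasDerivAt (t ν k) (t1 ν k x) x := by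
  have h1 : HasDerivAt (fun y : ℝ => y / 2) (1 / 2) x := (hasDerivAt_id x).div_const 2
  have h2 := (hasDerivAt_pow (2 * k) (x / 2)).comp x h1
  have h3 := h2.div_const (D ν k)
  exact h3

lemma t1_hasDeriv (ν : ℝ) (k : ℕ) (x : ℝ) : HasDerivAt (t1 ν k) (t2 ν k x) x := by
  have h1 : HasDerivAt (fun y : ℝ => y / 2) (1 / 2) x := (hasDerivAt_id x).div_const 2
  have h2 := (hasDerivAt_pow (2 * k - 1) (x / 2)).comp x h1
  have h3 := ((h2.const_mul ((2 * k : ℕ) : ℝ)).mul_const (1/2)).div_const (D ν k)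
  refine h3.congr_deriv (Eq.symm ?_)
  simp only [t2]
  ring

lemma abs_half_le {x R : ℝ} (hx : |x| ≤ R) : |x/2| ≤ R/2 := by
  rw [abs_div, abs_two]; linarith

lemma master {R : ℝ} (hR : 1 ≤ R) (m k : ℕ) (hm : m ≤ 2*k) {x : ℝ} (hx : |x| ≤ R) :
    |x/2|^m ≤ (R/2)^(2*k) * 2^(2*k - m) := by
  have h0 : (0:ℝ) < R := lt_of_lt_of_le one_pos hR
  have h1 : |x/2|^m ≤ (R/2)^m := pow_le_pow_left₀ (abs_nonneg _) (abs_half_le hx) m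
  have h2 : (1:ℝ) ≤ (R/2 * 2)^(2*k-m) := one_le_pow₀ (by linarith)
  calc |x/2|^m ≤ (R/2)^m * (R/2*2)^(2*k-m) := by
        nlinarith [pow_nonneg (abs_nonneg (x/2)) m, pow_nonneg (div_nonneg h0.le (by norm_num : (0:ℝ) ≤ 2)) m]
    _ = (R/2)^(2*k) * 2^(2*k-m) := by
        rw [mul_pow, ← mul_assoc, ← pow_add, Nat.add_sub_cancel' hm]

variable {ν : ℝ} (hν : -1/2 < ν)
include hν

lemma arg_pos (k : ℕ) : (0:ℝ) < 1 + ν + k := by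
  have : (0:ℝ) ≤ k := Nat.cast_nonneg k
  linarith

lemma D_pos (k : ℕ) : 0 < D ν k := by
  apply mul_pos (div_pos (Real.Gamma_pos_of_pos (arg_pos hν k)) (Real.Gamma_pos_of_pos (arg_pos hν 0 |>.trans_eq (by push_cast; ring))))
  exact_mod_cast k.factorial_pos

lemma D_zero : D ν 0 = 1 := by
  have h := Real.Gamma_pos_of_pos (show (0:ℝ) < 1 + ν + (0:ℕ) from arg_pos hν 0)
  simp only [D, Nat.cast_zero, add_zero, Nat.factorial_zero, Nat.cast_one, mul_one]
  rw [div_self]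
  simp only [Nat.cast_zero, add_zero] at h
  exact h.ne'

lemma D_succ (k : ℕ) : D ν (k + 1) = D ν k * ((k + 1) * (1 + ν + k)) := by
  have h : (1 : ℝ) + ν + ((k:ℝ) + 1) = (1 + ν + k) + 1 := by ring
  simp only [D, Nat.cast_add, Nat.cast_one, Nat.factorial_succ, Nat.cast_mul]
  rw [h, Real.Gamma_add_one (arg_pos hν k).ne']
  ring

lemma D_ge (k : ℕ) : ((k.factorial : ℝ))^2 / 2^k ≤ D ν k := by
  induction k with
  | zero => simp [D_zero hν]
  | succ k ih =>
    rw [D_succ hν k]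
    have h1 : ((k:ℝ) + 1) / 2 ≤ 1 + ν + k := by linarith [Nat.cast_nonneg (α := ℝ) k]
    have h2 : (0:ℝ) < (k:ℝ) + 1 := by positivity
    have h3 : ((k.factorial:ℝ))^2/2^k * (((k:ℝ)+1) * (((k:ℝ)+1)/2)) ≤ D ν k * (((k:ℝ)+1) * (1 + ν + k)) := by
      apply mul_le_mul ih _ (by positivity) ((D_pos hν k).le)
      exact mul_le_mul_of_nonneg_left h1 h2.le
    refine le_trans (le_of_eq ?_) h3
    rw [Nat.factorial_succ]
    push_cast
    ring

-- segment 2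

omit hν in
lemma kfact_one_le (k : ℕ) : (1:ℝ) ≤ (k.factorial:ℝ) := by
  exact_mod_cast k.factorial_pos

omit hν in
lemma pow_half_mul (R : ℝ) (k : ℕ) : (R/2)^(2*k) * 2^k = (R^2/2)^k := by
  rw [pow_mul, ← mul_pow]
  congr 1
  ring

lemma abs_t_le (k : ℕ) {x R : ℝ} (hR : 1 ≤ R) (hx : |x| ≤ R) :
    |t ν k x| ≤ (R^2/2)^k / k.factorial := by
  have hD := D_pos hν k
  have hM := master hR (2*k) k le_rfl hx
  rw [Nat.sub_self, pow_zero, mul_one] at hM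
  have hf1 := kfact_one_le k
  rw [t, abs_div, abs_of_pos hD, abs_pow]
  calc |x/2|^(2*k)/D ν k ≤ (R/2)^(2*k) / (((k.factorial:ℝ))^2/2^k) :=
        div_le_div₀ (by positivity) hM (by positivity) (D_ge hν k)
    _ = (R^2/2)^k / ((k.factorial:ℝ))^2 := by
        rw [div_div_eq_mul_div, pow_half_mul]
    _ ≤ (R^2/2)^k / k.factorial := by
        gcongr
        nlinarith
    
lemma abs_t1_le (k : ℕ) {x R : ℝ} (hR : 1 ≤ R) (hx : |x| ≤ R) :
    |t1 ν k x| ≤ 2 * (R^2/2)^k / k.factorial := by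
  have hD := D_pos hν k
  have hf1 := kfact_one_le k
  have hkk : (k:ℝ) ≤ (k.factorial:ℝ) := by exact_mod_cast k.self_le_factorial
  have hP : (0:ℝ) ≤ (R^2/2)^k := by positivity
  have hM : |x/2|^(2*k-1) ≤ (R/2)^(2*k) * 2 := by
    refine (master hR _ k (Nat.sub_le _ _) hx).trans ?_
    gcongr
    calc (2:ℝ)^(2*k - (2*k-1)) ≤ 2^1 := by
          apply pow_le_pow_right₀ (by norm_num)
          omega
      _ = 2 := pow_one 2
  have hnum : |((2*k:ℕ):ℝ) * (x/2)^(2*k-1) * (1/2)| ≤ (k:ℝ) * (R/2)^(2*k) * 2 := by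
    rw [abs_mul, abs_mul, abs_pow, abs_of_nonneg (by positivity : (0:ℝ) ≤ ((2*k:ℕ):ℝ)),
      abs_of_nonneg (by norm_num : (0:ℝ) ≤ (1/2:ℝ))]
    calc ((2*k:ℕ):ℝ) * |x/2|^(2*k-1) * (1/2) ≤ ((2*k:ℕ):ℝ) * ((R/2)^(2*k)*2) * (1/2) := by
          gcongr
      _ = (k:ℝ) * (R/2)^(2*k) * 2 := by push_cast; ring
  calc |t1 ν k x| = |((2*k:ℕ):ℝ) * (x/2)^(2*k-1) * (1/2)| / D ν k := by
        rw [t1, abs_div, abs_of_pos hD]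
    _ ≤ ((k:ℝ) * (R/2)^(2*k) * 2) / (((k.factorial:ℝ))^2/2^k) :=
        div_le_div₀ (by positivity) hnum (by positivity) (D_ge hν k)
    _ = (k:ℝ) * (R^2/2)^k * 2 / ((k.factorial:ℝ))^2 := by
        rw [div_div_eq_mul_div, ← pow_half_mul R k]
        ring
    _ ≤ 2 * (R^2/2)^k / k.factorial := by
        rw [div_le_div_iff₀ (by positivity) (by positivity)]
        nlinarith [mul_nonneg (mul_nonneg hP (by positivity : (0:ℝ) ≤ (k.factorial:ℝ))) (sub_nonneg.mpr hkk)]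

lemma abs_t2_le (k : ℕ) {x R : ℝ} (hR : 1 ≤ R) (hx : |x| ≤ R) :
    |t2 ν k x| ≤ 4 * (2*R^2)^k / k.factorial := by
  have hD := D_pos hν k
  have hf1 := kfact_one_le k
  have hP : (0:ℝ) ≤ (R^2/2)^k := by positivity
  have hk4 : ((k:ℝ))^2 ≤ 4^k := by
    have h1 : k^2 < (2^k)^2 := Nat.pow_lt_pow_left (Nat.lt_two_pow_self) (by norm_num)
    have h2 : (2^k)^2 = 4^k := by rw [← pow_mul, mul_comm, pow_mul]; norm_num
    have := h1.le.trans h2.le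
    exact_mod_cast this
  have hM : |x/2|^(2*k-1-1) ≤ (R/2)^(2*k) * 4 := by
    refine (master hR _ k (by omega) hx).trans ?_
    gcongr
    calc (2:ℝ)^(2*k - (2*k-1-1)) ≤ 2^2 := by
          apply pow_le_pow_right₀ (by norm_num)
          omega
      _ = 4 := by norm_num
  have hnum : |((2*k:ℕ):ℝ) * ((2*k-1:ℕ):ℝ) * (x/2)^(2*k-1-1) * (1/4)| ≤ ((k:ℝ))^2 * (R/2)^(2*k) * 4 := by
    rw [abs_mul, abs_mul, abs_mul, abs_pow,
      abs_of_nonneg (by positivity : (0:ℝ) ≤ ((2*k:ℕ):ℝ)),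
      abs_of_nonneg (by positivity : (0:ℝ) ≤ ((2*k-1:ℕ):ℝ)),
      abs_of_nonneg (by norm_num : (0:ℝ) ≤ (1/4:ℝ))]
    have hc1 : ((2*k:ℕ):ℝ) ≤ 2*(k:ℝ) := by push_cast; linarith
    have hc2 : ((2*k-1:ℕ):ℝ) ≤ 2*(k:ℝ) := by
      have : (2*k-1:ℕ) ≤ 2*k := Nat.sub_le _ _
      calc ((2*k-1:ℕ):ℝ) ≤ ((2*k:ℕ):ℝ) := by exact_mod_cast this
        _ = 2*(k:ℝ) := by push_cast; ring
    calc ((2*k:ℕ):ℝ) * ((2*k-1:ℕ):ℝ) * |x/2|^(2*k-1-1) * (1/4)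
        ≤ (2*(k:ℝ)) * (2*(k:ℝ)) * ((R/2)^(2*k)*4) * (1/4) := by
          gcongr <;> positivity
      _ = ((k:ℝ))^2 * (R/2)^(2*k) * 4 := by ring
  calc |t2 ν k x| = |((2*k:ℕ):ℝ) * ((2*k-1:ℕ):ℝ) * (x/2)^(2*k-1-1) * (1/4)| / D ν k := by
        rw [t2, abs_div, abs_of_pos hD]
    _ ≤ (((k:ℝ))^2 * (R/2)^(2*k) * 4) / (((k.factorial:ℝ))^2/2^k) :=
        div_le_div₀ (by positivity) hnum (by positivity) (D_ge hν k)
    _ = ((k:ℝ))^2 * (R^2/2)^k * 4 / ((k.factorial:ℝ))^2 := by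
        rw [div_div_eq_mul_div, ← pow_half_mul R k]
        ring
    _ ≤ 4 * (2*R^2)^k / k.factorial := by
        rw [div_le_div_iff₀ (by positivity) (by positivity)]
        have he : (2*R^2:ℝ)^k = 4^k * (R^2/2)^k := by
          rw [← mul_pow]
          congr 1
          ring
        rw [he]
        have h4nn : (0:ℝ) ≤ 4^k := by positivity
        have hfnn : (0:ℝ) ≤ (k.factorial:ℝ) := by positivity
        nlinarith [mul_nonneg (mul_nonneg hP hfnn) (sub_nonneg.mpr hk4),
          mul_nonneg (mul_nonneg (mul_nonneg h4nn hP) hfnn) (sub_nonneg.mpr hf1)]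

-- segment 3

omit hν in
lemma summable_aux (C a : ℝ) : Summable (fun k : ℕ => C * a^k / k.factorial) := by
  have h := (Real.summable_pow_div_factorial a).mul_left C
  simpa [mul_div_assoc] using h

omit hν in
lemma R_prop (x : ℝ) : 1 ≤ |x| + 1 ∧ |x| ≤ |x| + 1 := by
  constructor <;> linarith [abs_nonneg x]

lemma summable_t (x : ℝ) : Summable (fun k => t ν k x) := by
  refine Summable.of_norm_bounded (summable_aux 1 ((|x|+1)^2/2)) fun k => ?_
  rw [Real.norm_eq_abs, one_mul]
  exact abs_t_le hν k (R_prop x).1 (R_prop x).2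

lemma summable_t1 (x : ℝ) : Summable (fun k => t1 ν k x) := by
  refine Summable.of_norm_bounded (summable_aux 2 ((|x|+1)^2/2)) fun k => ?_
  rw [Real.norm_eq_abs]
  exact abs_t1_le hν k (R_prop x).1 (R_prop x).2

lemma summable_t2 (x : ℝ) : Summable (fun k => t2 ν k x) := by
  refine Summable.of_norm_bounded (summable_aux 4 (2*(|x|+1)^2)) fun k => ?_
  rw [Real.norm_eq_abs]
  exact abs_t2_le hν k (R_prop x).1 (R_prop x).2

omit hν in
lemma t1_zero (k : ℕ) : t1 ν k 0 = 0 := by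
  cases k with
  | zero => simp [t1]
  | succ n =>
    have h : ((0:ℝ)/2) ^ (2*(n+1)-1) = 0 := by
      rw [zero_div]; exact zero_pow (by omega)
    simp [t1, h]
    exact Or.inl (Or.inr (by omega))

omit hν in
lemma t_zero (k : ℕ) (hk : k ≠ 0) : t ν k 0 = 0 := by
  have h : ((0:ℝ)/2) ^ (2*k) = 0 := by
    rw [zero_div]; exact zero_pow (by omega)
  simp [t, h]
  exact Or.inl hk

noncomputable def S (ν : ℝ) (x : ℝ) : ℝ := ∑' k, t ν k x
noncomputable def S1 (ν : ℝ) (x : ℝ) : ℝ := ∑' k, t1 ν k x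
noncomputable def S2 (ν : ℝ) (x : ℝ) : ℝ := ∑' k, t2 ν k x

lemma S_hasDeriv (x : ℝ) : HasDerivAt (S ν) (S1 ν x) x := by
  set R := |x| + 1 with hRdef
  have hball : x ∈ Metric.ball (0:ℝ) R := by
    simp [Real.dist_eq]
    linarith [abs_nonneg x]
  have h0 : (0:ℝ) ∈ Metric.ball (0:ℝ) R := by
    simp [Real.dist_eq]
    linarith [abs_nonneg x]
  exact hasDerivAt_tsum_of_isPreconnected (summable_aux 2 (R^2/2)) Metric.isOpen_ball
    ((convex_ball (0:ℝ) R).isPreconnected)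
    (fun k y _ => t_hasDeriv ν k y)
    (fun k y hy => by
      rw [Real.norm_eq_abs]
      refine abs_t1_le hν k (R_prop x).1 ?_
      rw [Metric.mem_ball, Real.dist_eq, sub_zero] at hy
      exact hy.le)
    h0 (summable_t hν 0) hball

lemma S1_hasDeriv (x : ℝ) : HasDerivAt (S1 ν) (S2 ν x) x := by
  set R := |x| + 1 with hRdef
  have hball : x ∈ Metric.ball (0:ℝ) R := by
    simp [Real.dist_eq]
    linarith [abs_nonneg x]
  have h0 : (0:ℝ) ∈ Metric.ball (0:ℝ) R := by
    simp [Real.dist_eq]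
    linarith [abs_nonneg x]
  exact hasDerivAt_tsum_of_isPreconnected (summable_aux 4 (2*R^2)) Metric.isOpen_ball
    ((convex_ball (0:ℝ) R).isPreconnected)
    (fun k y _ => t1_hasDeriv ν k y)
    (fun k y hy => by
      rw [Real.norm_eq_abs]
      refine abs_t2_le hν k (R_prop x).1 ?_
      rw [Metric.mem_ball, Real.dist_eq, sub_zero] at hy
      exact hy.le)
    h0 (by simpa [t1_zero] using summable_zero) hball

-- segment 4

lemma S_zero : S ν 0 = 1 := by
  rw [S, tsum_eq_single 0 (fun k hk => t_zero k hk)]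
  simp [t, D_zero hν]

omit hν in
lemma S1_zero : S1 ν 0 = 0 := by
  rw [S1]
  calc ∑' k, t1 ν k 0 = ∑' (_:ℕ), (0:ℝ) := tsum_congr fun k => t1_zero k
    _ = 0 := tsum_zero

lemma t_nonneg (k : ℕ) (x : ℝ) : 0 ≤ t ν k x := by
  rw [t, pow_mul]
  have h : (0:ℝ) ≤ ((x/2)^2)^k := by positivity
  exact div_nonneg h (D_pos hν k).le

lemma S_ge_one (x : ℝ) : 1 ≤ S ν x := by
  have h0 : t ν 0 x = 1 := by simp [t, D_zero hν]
  have := Summable.le_tsum (summable_t hν x) 0 (fun j _ => t_nonneg hν j x)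
  rw [h0] at this
  exact this

lemma S_pos (x : ℝ) : 0 < S ν x := lt_of_lt_of_le one_pos (S_ge_one hν x)

lemma t1_nonneg (k : ℕ) {x : ℝ} (hx : 0 ≤ x) : 0 ≤ t1 ν k x := by
  rw [t1]
  have h : (0:ℝ) ≤ (x/2)^(2*k-1) := pow_nonneg (by linarith) _
  have h2 : (0:ℝ) ≤ ((2*k:ℕ):ℝ) := by positivity
  exact div_nonneg (by nlinarith) (D_pos hν k).le

lemma S1_nonneg {x : ℝ} (hx : 0 ≤ x) : 0 ≤ S1 ν x :=
  tsum_nonneg fun k => t1_nonneg hν k hx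

lemma S1_pos {x : ℝ} (hx : 0 < x) : 0 < S1 ν x := by
  refine Summable.tsum_pos (summable_t1 hν x) (fun k => t1_nonneg hν k hx.le) 1 ?_
  have he : t1 ν 1 x = (x/2) / D ν 1 := by
    norm_num [t1]
    ring
  rw [he]
  exact div_pos (by linarith) (D_pos hν 1)

lemma ode_key (k : ℕ) (x : ℝ) :
    x * t2 ν (k+1) x + (2*ν+1) * t1 ν (k+1) x = x * t ν k x := by
  have e1 : 2*(k+1)-1 = 2*k+1 := by omega
  have e2 : 2*(k+1)-1-1 = 2*k := by omega
  have hD := (D_pos hν k).ne'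
  have hc : ((k:ℝ)+1) * (1+ν+k) ≠ 0 :=
    (mul_pos (by positivity) (arg_pos hν k)).ne'
  have hc2 : (1+ν+k) ≠ 0 := (arg_pos hν k).ne'
  simp only [t, t1, t2, e2, e1, D_succ hν k]
  push_cast
  field_simp
  ring

lemma ode (x : ℝ) : x * S2 ν x + (2*ν+1) * S1 ν x = x * S ν x := by
  have h2 : Summable (fun k => x * t2 ν k x) := (summable_t2 hν x).mul_left x
  have h1 : Summable (fun k => (2*ν+1) * t1 ν k x) := (summable_t1 hν x).mul_left _
  have hsum : Summable (fun k => x * t2 ν k x + (2*ν+1) * t1 ν k x) := h2.add h1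
  have key0 : x * t2 ν 0 x + (2*ν+1) * t1 ν 0 x = 0 := by
    simp [t1, t2]
  calc x * S2 ν x + (2*ν+1) * S1 ν x
      = ∑' k, (x * t2 ν k x + (2*ν+1) * t1 ν k x) := by
        rw [S2, S1, ← tsum_mul_left, ← tsum_mul_left, Summable.tsum_add h2 h1]
    _ = (x * t2 ν 0 x + (2*ν+1) * t1 ν 0 x)
        + ∑' k, (x * t2 ν (k+1) x + (2*ν+1) * t1 ν (k+1) x) := Summable.tsum_eq_zero_add hsum
    _ = ∑' k, x * t ν k x := by
        rw [key0, zero_add]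
        exact tsum_congr fun k => ode_key hν k x
    _ = x * S ν x := by rw [S, tsum_mul_left]

-- segment 5

lemma G_hasDeriv (x : ℝ) :
    HasDerivAt (fun y => Real.exp y * (S ν y - S1 ν y)) (Real.exp x * (S ν x - S2 ν x)) x := by
  have h := (Real.hasDerivAt_exp x).mul ((S_hasDeriv hν x).sub (S1_hasDeriv hν x))
  refine h.congr_deriv (Eq.symm ?_)
  simp only [Pi.mul_apply, Pi.sub_apply]
  ring

lemma S_sub_S2_pos {x : ℝ} (hx : 0 < x) : 0 < S ν x - S2 ν x := by
  have h1 : x * (S ν x - S2 ν x) = (2*ν+1) * S1 ν x := by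
    have := ode hν x
    ring_nf
    ring_nf at this ⊢
    linarith
  have h2 : 0 < x * (S ν x - S2 ν x) := by
    rw [h1]
    exact mul_pos (by linarith) (S1_pos hν hx)
  rcases mul_pos_iff.mp h2 with ⟨_, h⟩ | ⟨h, _⟩
  · exact h
  · linarith

lemma G_strictMono : StrictMonoOn (fun y => Real.exp y * (S ν y - S1 ν y)) (Set.Ici (0:ℝ)) := by
  apply strictMonoOn_of_deriv_pos (convex_Ici 0)
    (fun x _ => (G_hasDeriv hν x).differentiableAt.continuousAt.continuousWithinAt)
  intro x hx
  rw [interior_Ici] at hx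
  rw [(G_hasDeriv hν x).deriv]
  exact mul_pos (Real.exp_pos x) (S_sub_S2_pos hν hx)

lemma g_pos {x : ℝ} (hx : 0 < x) : 0 < S ν x - S1 ν x := by
  have h := G_strictMono hν (Set.self_mem_Ici) (Set.mem_Ici.mpr hx.le) hx
  simp only [Real.exp_zero, S_zero hν, S1_zero, one_mul, sub_zero] at h
  nlinarith [Real.exp_pos x]

lemma g_ge {x : ℝ} (hx : 0 < x) : Real.exp (-x) < S ν x - S1 ν x := by
  have h := G_strictMono hν (Set.self_mem_Ici) (Set.mem_Ici.mpr hx.le) hx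
  simp only [Real.exp_zero, S_zero hν, S1_zero, one_mul, sub_zero] at h
  have he : Real.exp (-x) * Real.exp x = 1 := by
    rw [← Real.exp_add]; simp
  nlinarith [Real.exp_pos x, Real.exp_pos (-x)]

lemma S1_lt_S {x : ℝ} (hx : 0 < x) : S1 ν x < S ν x := by
  linarith [g_pos hν hx]

-- segment 6

omit hν in
lemma psi_eq (x : ℝ) : psiI ν x = x - Real.log (S ν x) := rfl

lemma psi_hasDeriv (x : ℝ) : HasDerivAt (psiI ν) (1 - S1 ν x / S ν x) x := by
  have h : psiI ν = fun y => y - Real.log (S ν y) := rfl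
  rw [h]
  exact (hasDerivAt_id x).sub ((S_hasDeriv hν x).log (S_pos hν x).ne')

lemma psi_zero : psiI ν 0 = 0 := by
  rw [psi_eq, S_zero hν, Real.log_one, sub_zero]

lemma psi_strictMono : StrictMonoOn (psiI ν) (Set.Ioi (0:ℝ)) := by
  apply strictMonoOn_of_deriv_pos (convex_Ioi 0)
    (fun x _ => (psi_hasDeriv hν x).differentiableAt.continuousAt.continuousWithinAt)
  intro x hx
  rw [interior_Ioi] at hx
  rw [(psi_hasDeriv hν x).deriv]
  have h1 : S1 ν x / S ν x < 1 := (div_lt_one (S_pos hν x)).mpr (S1_lt_S hν hx)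
  linarith

-- segment 7

noncomputable def W (ν x : ℝ) : ℝ :=
  Real.exp x * x^(2*ν+1) * (S ν x - S1 ν x) - ((2*ν+1)/4) * (x^(2*ν) * Real.exp x * S ν x)

lemma W_hasDeriv {x : ℝ} (hx : 0 < x) :
    HasDerivAt (W ν)
      (Real.exp x * x^(2*ν-1) * ((2*ν+1) * (x * S ν x)
        - ((2*ν+1)/4) * (2*ν * S ν x + x * S ν x + x * S1 ν x))) x := by
  have hp1 : HasDerivAt (fun y : ℝ => y^(2*ν+1)) ((2*ν+1) * x^(2*ν+1-1)) x :=
    Real.hasDerivAt_rpow_const (Or.inl hx.ne')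
  have hp2 : HasDerivAt (fun y : ℝ => y^(2*ν)) ((2*ν) * x^(2*ν-1)) x :=
    Real.hasDerivAt_rpow_const (Or.inl hx.ne')
  have hA := ((Real.hasDerivAt_exp x).mul hp1).mul ((S_hasDeriv hν x).sub (S1_hasDeriv hν x))
  have hB := ((hp2.mul (Real.hasDerivAt_exp x)).mul (S_hasDeriv hν x)).const_mul ((2*ν+1)/4)
  have h := hA.sub hB
  refine h.congr_deriv (Eq.symm ?_)
  simp only [Pi.mul_apply, Pi.sub_apply]
  rw [show 2*ν+1-1 = 2*ν from by ring]
  have e1 : x ^ (2*ν+1) = x^(2*ν) * x := Real.rpow_add_one hx.ne' (2*ν)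
  have e2 : x ^ (2*ν) = x^(2*ν-1) * x := by
    have h2 := Real.rpow_add_one hx.ne' (2*ν-1)
    rw [show 2*ν-1+1 = 2*ν from by ring] at h2
    exact h2
  rw [e1, e2]
  linear_combination (Real.exp x * (x^(2*ν-1) * x)) * ode hν x

lemma W_mono : MonotoneOn (W ν) (Set.Ici (max ν 1)) := by
  have hsub : ∀ x, max ν 1 ≤ x → (0:ℝ) < x := fun x hx =>
    lt_of_lt_of_le one_pos ((le_max_right ν 1).trans hx)
  apply monotoneOn_of_deriv_nonneg (convex_Ici _)
    (fun x hx => (W_hasDeriv hν (hsub x hx)).differentiableAt.continuousAt.continuousWithinAt)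
    (fun x hx => by
      rw [interior_Ici] at hx
      exact (W_hasDeriv hν (hsub x hx.le)).differentiableAt.differentiableWithinAt)
  intro x hx
  rw [interior_Ici] at hx
  have hx0 : 0 < x := hsub x hx.le
  have hxν : ν ≤ x := (le_max_left ν 1).trans hx.le
  rw [(W_hasDeriv hν hx0).deriv]
  have hb : 0 ≤ (2*ν+1) * (x * S ν x)
      - ((2*ν+1)/4) * (2*ν * S ν x + x * S ν x + x * S1 ν x) := by
    have hS := S_pos hν x
    have hS1 := (S1_lt_S hν hx0).le
    have hμ : (0:ℝ) < 2*ν+1 := by linarith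
    nlinarith [mul_nonneg (mul_nonneg hμ.le (sub_nonneg.mpr hxν)) hS.le,
      mul_nonneg (mul_nonneg hμ.le hx0.le) (sub_nonneg.mpr hS1)]
  exact mul_nonneg (mul_nonneg (Real.exp_pos x).le (Real.rpow_nonneg hx0.le _)) hb

noncomputable def Psi (ν C0 x : ℝ) : ℝ :=
  psiI ν x - ((2*ν+1)/4) * Real.log x - C0 * Real.exp (-x)

lemma Psi_hasDeriv (C0 : ℝ) {x : ℝ} (hx : 0 < x) :
    HasDerivAt (Psi ν C0)
      ((1 - S1 ν x / S ν x) - ((2*ν+1)/4) * x⁻¹ - C0 * (Real.exp (-x) * (-1))) x := by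
  have h1 := psi_hasDeriv hν x
  have h2 := (Real.hasDerivAt_log hx.ne').const_mul ((2*ν+1)/4)
  have h3 := ((Real.hasDerivAt_exp (-x)).comp x (hasDerivAt_neg x)).const_mul C0
  exact (h1.sub h2).sub h3

lemma Psi_mono : MonotoneOn (Psi ν (max 0 (-(W ν (max ν 1))))) (Set.Ici (max ν 1)) := by
  set x1 := max ν 1 with hx1def
  set C0 := max 0 (-(W ν x1)) with hC0def
  have hC0 : 0 ≤ C0 := le_max_left 0 _
  have hWx1 : -C0 ≤ W ν x1 := by
    have := le_max_right 0 (-(W ν x1))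
    linarith
  have hsub : ∀ x, x1 ≤ x → (0:ℝ) < x := fun x hx =>
    lt_of_lt_of_le one_pos ((le_max_right ν 1).trans hx)
  apply monotoneOn_of_deriv_nonneg (convex_Ici _)
    (fun x hx => (Psi_hasDeriv hν C0 (hsub x hx)).differentiableAt.continuousAt.continuousWithinAt)
    (fun x hx => by
      rw [interior_Ici] at hx
      exact (Psi_hasDeriv hν C0 (hsub x hx.le)).differentiableAt.differentiableWithinAt)
  intro x hx
  rw [interior_Ici] at hx
  have hx0 : 0 < x := hsub x hx.le
  have hx1le : (1:ℝ) ≤ x := (le_max_right ν 1).trans hx.le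
  rw [(Psi_hasDeriv hν C0 hx0).deriv]
  -- notation
  have hS := S_pos hν x
  have hS1ge : (1:ℝ) ≤ S ν x := S_ge_one hν x
  have hE : (0:ℝ) < Real.exp x := Real.exp_pos x
  have hP0 : (0:ℝ) < x^(2*ν) := Real.rpow_pos_of_pos hx0 _
  have hP1ge : (1:ℝ) ≤ x^(2*ν) * x := by
    have h01 : x^(0:ℝ) ≤ x^(2*ν+1) := Real.rpow_le_rpow_of_exponent_le hx1le (by linarith)
    rw [Real.rpow_zero] at h01
    rw [← Real.rpow_add_one hx0.ne' (2*ν)]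
    exact h01
  have hW : -C0 ≤ W ν x := hWx1.trans (W_mono hν Set.self_mem_Ici (Set.mem_Ici.mpr hx.le) hx.le)
  rw [W, Real.rpow_add_one hx0.ne' (2*ν)] at hW
  -- clear denominators
  have hmul : (0:ℝ) < S ν x * (x * (Real.exp x * (x^(2*ν) * x))) := by positivity
  rw [← mul_nonneg_iff_of_pos_left hmul]
  have hexpand : S ν x * (x * (Real.exp x * (x^(2*ν) * x))) *
      ((1 - S1 ν x / S ν x) - ((2*ν+1)/4) * x⁻¹ - C0 * (Real.exp (-x) * (-1)))
      = x * Real.exp x * (x^(2*ν) * x) * (S ν x - S1 ν x)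
        - ((2*ν+1)/4) * (S ν x * Real.exp x * (x^(2*ν) * x))
        + C0 * S ν x * x * (x^(2*ν) * x) := by
    rw [Real.exp_neg]
    field_simp
    ring
  rw [hexpand]
  have hWx : (-C0) * x ≤ (Real.exp x * (x^(2*ν) * x) * (S ν x - S1 ν x)
      - (2*ν+1)/4 * (x^(2*ν) * Real.exp x * S ν x)) * x :=
    mul_le_mul_of_nonneg_right hW hx0.le
  have hSxP : (1:ℝ) ≤ S ν x * (x^(2*ν) * x) := by nlinarith
  nlinarith [mul_nonneg (mul_nonneg hC0 hx0.le) (sub_nonneg.mpr hSxP)]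

lemma psi_tendsto : Tendsto (psiI ν) atTop atTop := by
  set x1 := max ν 1 with hx1def
  set C0 := max 0 (-(W ν x1)) with hC0def
  have hB : (0:ℝ) < (2*ν+1)/4 := by linarith
  have hge : ∀ x, x1 ≤ x → Psi ν C0 x1 + ((2*ν+1)/4) * Real.log x ≤ psiI ν x := by
    intro x hx
    have h : Psi ν C0 x1 ≤ Psi ν C0 x := Psi_mono hν Set.self_mem_Ici hx hx
    have h3 : Psi ν C0 x = psiI ν x - ((2*ν+1)/4) * Real.log x - C0 * Real.exp (-x) := rfl
    rw [h3] at h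
    have h2 : 0 ≤ C0 * Real.exp (-x) := by
      have : (0:ℝ) ≤ C0 := le_max_left 0 _
      positivity
    linarith
  have htend : Tendsto (fun x => Psi ν C0 x1 + ((2*ν+1)/4) * Real.log x) atTop atTop :=
    tendsto_atTop_add_const_left _ _ (Real.tendsto_log_atTop.const_mul_atTop hB)
  exact tendsto_atTop_mono' atTop (eventually_atTop.mpr ⟨x1, hge⟩) htend

end PsiAux

theorem psiI_props {ν : ℝ} (hν : -1/2 < ν) :
    psiI ν 0 = 0 ∧ StrictMonoOn (psiI ν) (Set.Ioi (0 : ℝ)) ∧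
      Tendsto (psiI ν) atTop atTop :=
  ⟨PsiAux.psi_zero hν, PsiAux.psi_strictMono hν, PsiAux.psi_tendsto hν⟩
end

section
/- Let m ≥ 2, σ_1,…,σ_m > -1, p = m+1, and let F(x) = ₀F_m(—; σ_1+1,…,σ_m+1; -(x/p)^p) be the normalized hyper-Bessel function with first positive zero j_{σ,1}. Then ψ(x) = -log F(x) defines a continuous strictly monotone map on [0, j_{σ,1}) with ψ(0) = 0 and ψ(x) → ∞ as x → j_{σ,1}⁻, and its Maclaurin series begins ψ(x) = μ_1 (x/p)^p + (1/2)μ_1(μ_1 - μ_2)(x/p)^{2p} + O(x^{3p}), where μ_k = ∏_j (σ_j + k)^{-1}. -/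
open Real Filter Asymptotics

/-- The normalised hyper-Bessel hypergeometric series
`₀F_m(—; σ_1+1,…,σ_m+1; -(x/(m+1))^{m+1})`. -/
noncomputable def hyperF (m : ℕ) (σ : Fin m → ℝ) (x : ℝ) : ℝ :=
  ∑' k : ℕ, (-(x / (m + 1)) ^ (m + 1)) ^ k /
    ((∏ j, Real.Gamma (σ j + 1 + k) / Real.Gamma (σ j + 1)) * k.factorial)

namespace HB

variable {m : ℕ}

noncomputable def D (σ : Fin m → ℝ) (k : ℕ) : ℝ :=
  ∏ j, Real.Gamma (σ j + 1 + k) / Real.Gamma (σ j + 1)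

noncomputable def c (σ : Fin m → ℝ) (k : ℕ) : ℝ :=
  (-1) ^ k / (D σ k * k.factorial)

noncomputable def f (σ : Fin m → ℝ) (t : ℝ) : ℝ := ∑' k, c σ k * t ^ k

variable {σ : Fin m → ℝ}

lemma sig_pos (hσ : ∀ j, -1 < σ j) (j : Fin m) : 0 < σ j + 1 := by linarith [hσ j]

lemma sig_k_pos (hσ : ∀ j, -1 < σ j) (j : Fin m) (k : ℕ) : 0 < σ j + 1 + k := by
  have h := hσ j
  have : (0:ℝ) ≤ k := Nat.cast_nonneg k
  linarith

lemma D_zero (hσ : ∀ j, -1 < σ j) : D σ 0 = 1 := by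
  rw [D]
  apply Finset.prod_eq_one
  intro j _
  rw [Nat.cast_zero, add_zero,
    div_self (Real.Gamma_pos_of_pos (sig_pos hσ j)).ne']

lemma D_pos (hσ : ∀ j, -1 < σ j) (k : ℕ) : 0 < D σ k := by
  apply Finset.prod_pos
  intro j _
  exact div_pos (Real.Gamma_pos_of_pos (sig_k_pos hσ j k))
    (Real.Gamma_pos_of_pos (sig_pos hσ j))

lemma D_succ (hσ : ∀ j, -1 < σ j) (k : ℕ) :
    D σ (k + 1) = D σ k * ∏ j, (σ j + 1 + k) := by
  rw [D, D, ← Finset.prod_mul_distrib]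
  refine Finset.prod_congr rfl fun j _ => ?_
  have h1 : σ j + 1 + (k + 1 : ℕ) = (σ j + 1 + k) + 1 := by push_cast; ring
  rw [h1, Real.Gamma_add_one (sig_k_pos hσ j k).ne']
  ring

lemma D_ge (hσ : ∀ j, -1 < σ j) : ∀ k, min 1 (D σ 1) ≤ D σ k := by
  have mono : ∀ k, 1 ≤ k → D σ k ≤ D σ (k + 1) := by
    intro k hk
    rw [D_succ hσ]
    nth_rewrite 1 [← mul_one (D σ k)]
    apply mul_le_mul_of_nonneg_left _ (D_pos hσ k).le
    have h1' : (1:ℝ) = ∏ _j : Fin m, (1:ℝ) := by simp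
    rw [h1']
    apply Finset.prod_le_prod (fun j _ => zero_le_one)
    intro j _
    have h1 := hσ j
    have h2 : (1:ℝ) ≤ k := by exact_mod_cast hk
    linarith
  intro k
  match k with
  | 0 => rw [D_zero hσ]; exact min_le_left _ _
  | (n+1) =>
    induction n with
    | zero => exact min_le_right _ _
    | succ i ih => exact le_trans ih (mono (i+1) (Nat.succ_le_succ (Nat.zero_le i)))

lemma c_bound (hσ : ∀ j, -1 < σ j) :
    ∀ k, |c σ k| ≤ (min 1 (D σ 1))⁻¹ / k.factorial := by
  intro k
  have hδ : 0 < min 1 (D σ 1) := lt_min one_pos (D_pos hσ 1)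
  have hDk := D_pos hσ k
  have hfac : (0:ℝ) < k.factorial := by exact_mod_cast k.factorial_pos
  rw [c, abs_div, abs_pow, abs_neg, abs_one, one_pow, abs_of_pos (by positivity)]
  rw [inv_eq_one_div, div_div]
  apply one_div_le_one_div_of_le (by positivity)
  exact mul_le_mul_of_nonneg_right (D_ge hσ k) hfac.le

-- summability helpers
lemma summable_npow_fac (r : ℝ) : Summable (fun n : ℕ => (n:ℝ) * |r| ^ (n-1) / n.factorial) := by
  rw [← summable_nat_add_iff 1]
  have : (fun n : ℕ => ((n+1:ℕ):ℝ) * |r| ^ ((n+1)-1) / (n+1).factorial)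
      = fun n : ℕ => |r| ^ n / n.factorial := by
    funext n
    rw [Nat.factorial_succ, Nat.add_sub_cancel]
    push_cast
    field_simp
  rw [this]
  exact Real.summable_pow_div_factorial _

lemma summable_c_pow (hc : ∀ k : ℕ, |c σ k| ≤ (min 1 (D σ 1))⁻¹ / k.factorial) (t : ℝ) :
    Summable (fun k : ℕ => c σ k * t ^ k) := by
  apply Summable.of_norm
  refine Summable.of_nonneg_of_le (fun k => norm_nonneg _) (fun k => ?_)
    ((Real.summable_pow_div_factorial |t|).mul_left (min 1 (D σ 1))⁻¹)
  rw [norm_mul, norm_pow]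
  calc ‖c σ k‖ * ‖t‖ ^ k ≤ ((min 1 (D σ 1))⁻¹ / k.factorial) * |t| ^ k :=
        mul_le_mul_of_nonneg_right (hc k) (by positivity)
    _ = (min 1 (D σ 1))⁻¹ * (|t| ^ k / k.factorial) := by ring

lemma summable_kc_pow (hc : ∀ k : ℕ, |c σ k| ≤ (min 1 (D σ 1))⁻¹ / k.factorial) (t : ℝ) :
    Summable (fun k : ℕ => (k:ℝ) * c σ k * t ^ (k-1)) := by
  apply Summable.of_norm
  refine Summable.of_nonneg_of_le (fun k => norm_nonneg _) (fun k => ?_)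
    ((summable_npow_fac t).mul_left (min 1 (D σ 1))⁻¹)
  rw [norm_mul, norm_mul, norm_pow]
  have hk : ‖(k:ℝ)‖ = (k:ℝ) := by simp
  rw [hk]
  calc (k:ℝ) * ‖c σ k‖ * ‖t‖ ^ (k-1)
      ≤ (k:ℝ) * ((min 1 (D σ 1))⁻¹ / k.factorial) * |t| ^ (k-1) :=
        mul_le_mul_of_nonneg_right
          (mul_le_mul_of_nonneg_left (hc k) (Nat.cast_nonneg k)) (by positivity)
    _ = (min 1 (D σ 1))⁻¹ * ((k:ℝ) * |t| ^ (k-1) / k.factorial) := by ring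

lemma f_continuous (hσ : ∀ j, -1 < σ j) : Continuous (f σ) := by
  rw [continuous_iff_continuousAt]
  intro x
  set R : ℝ := |x| + 1 with hR
  have hxR : x ∈ Metric.ball (0:ℝ) R := by
    simp only [Metric.mem_ball, dist_zero_right, Real.norm_eq_abs, hR]
    linarith
  have hcont : ContinuousOn (f σ) (Metric.ball (0:ℝ) R) := by
    apply continuousOn_tsum (u := fun k => |c σ k| * R ^ k)
    · exact fun k => (continuous_const.mul (continuous_pow k)).continuousOn
    · apply Summable.of_nonneg_of_le (fun k => by positivity) (fun k => ?_)
        ((Real.summable_pow_div_factorial R).mul_left (min 1 (D σ 1))⁻¹)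
      calc |c σ k| * R ^ k ≤ ((min 1 (D σ 1))⁻¹ / k.factorial) * R ^ k :=
            mul_le_mul_of_nonneg_right (c_bound hσ k) (by positivity)
        _ = (min 1 (D σ 1))⁻¹ * (R ^ k / k.factorial) := by ring
    · intro k t ht
      simp only [Metric.mem_ball, dist_zero_right, Real.norm_eq_abs] at ht
      rw [norm_mul, norm_pow, Real.norm_eq_abs, Real.norm_eq_abs]
      exact mul_le_mul_of_nonneg_left
        (pow_le_pow_left₀ (abs_nonneg t) (by linarith) k) (abs_nonneg _)
  exact hcont.continuousAt (Metric.isOpen_ball.mem_nhds hxR)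

lemma c_zero (hσ : ∀ j, -1 < σ j) : c σ 0 = 1 := by
  rw [c, D_zero hσ]; simp

lemma f_zero (hσ : ∀ j, -1 < σ j) : f σ 0 = 1 := by
  rw [f, tsum_eq_single 0 (fun k hk => by
    rw [zero_pow hk, mul_zero])]
  rw [pow_zero, mul_one, c_zero hσ]

lemma hasDerivAt_f (hσ : ∀ j, -1 < σ j) (t : ℝ) :
    HasDerivAt (f σ) (∑' k : ℕ, (k:ℝ) * c σ k * t ^ (k-1)) t := by
  set R : ℝ := |t| + 1 with hR
  have htR : t ∈ Metric.ball (0:ℝ) R := by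
    simp only [Metric.mem_ball, dist_zero_right, Real.norm_eq_abs, hR]; linarith
  have h0R : (0:ℝ) ∈ Metric.ball (0:ℝ) R := by
    simp only [Metric.mem_ball, dist_zero_right, norm_zero, hR]
    have := abs_nonneg t; linarith
  have hRpos : (0:ℝ) < R := by rw [hR]; have := abs_nonneg t; linarith
  have hd : (0:ℝ) < min 1 (D σ 1) := lt_min one_pos (D_pos hσ 1)
  suffices H : HasDerivAt (fun y : ℝ => ∑' k : ℕ, c σ k * y ^ k)
      (∑' k : ℕ, (k:ℝ) * c σ k * t ^ (k-1)) t from H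
  refine hasDerivAt_tsum_of_isPreconnected
    (u := fun k : ℕ => (k:ℝ) * ((min 1 (D σ 1))⁻¹ / k.factorial) * R ^ (k-1))
    (g := fun (k : ℕ) (y : ℝ) => c σ k * y ^ k)
    (g' := fun (k : ℕ) (y : ℝ) => (k:ℝ) * c σ k * y ^ (k-1))
    ?_ Metric.isOpen_ball (convex_ball _ _).isPreconnected
    (fun k y _ => ?_) (fun k y hy => ?_) h0R ?_ htR
  · apply Summable.of_nonneg_of_le
      (fun k => mul_nonneg (mul_nonneg (Nat.cast_nonneg k)
        (div_nonneg (inv_nonneg.mpr hd.le) (Nat.cast_nonneg _)))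
        (pow_nonneg hRpos.le _)) (fun k => ?_)
      ((summable_npow_fac R).mul_left (min 1 (D σ 1))⁻¹)
    have : (|R| : ℝ) = R := abs_of_pos hRpos
    rw [this]
    apply le_of_eq; ring
  · have := (hasDerivAt_pow k y).const_mul (c σ k)
    convert this using 1
    exacts [rfl, by ring]
  · simp only [Metric.mem_ball, dist_zero_right, Real.norm_eq_abs] at hy
    rw [Real.norm_eq_abs, abs_mul, abs_mul, abs_pow]
    have h1 : |(k:ℝ)| = (k:ℝ) := by simp
    rw [h1]
    have h2 : |y| ^ (k-1) ≤ R ^ (k-1) := pow_le_pow_left₀ (abs_nonneg y) (by linarith) _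
    calc (k:ℝ) * |c σ k| * |y| ^ (k-1) ≤ (k:ℝ) * |c σ k| * R ^ (k-1) :=
          mul_le_mul_of_nonneg_left h2 (mul_nonneg (Nat.cast_nonneg k) (abs_nonneg _))
      _ = |c σ k| * ((k:ℝ) * R ^ (k-1)) := by ring
      _ ≤ ((min 1 (D σ 1))⁻¹ / k.factorial) * ((k:ℝ) * R ^ (k-1)) :=
          mul_le_mul_of_nonneg_right (c_bound hσ k)
            (mul_nonneg (Nat.cast_nonneg k) (pow_nonneg hRpos.le _))
      _ = (k:ℝ) * ((min 1 (D σ 1))⁻¹ / k.factorial) * R ^ (k-1) := by ring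
  · exact summable_c_pow (c_bound hσ) 0

lemma update_gt (hσ : ∀ j, -1 < σ j) (j₀ : Fin m) :
    ∀ j, -1 < Function.update σ j₀ (σ j₀ + 1) j := by
  intro j
  rcases eq_or_ne j j₀ with rfl | hne
  · simp only [Function.update_self]; linarith [hσ j]
  · rw [Function.update_of_ne hne]; exact hσ j

lemma D_update (hσ : ∀ j, -1 < σ j) (j₀ : Fin m) (k : ℕ) :
    D (Function.update σ j₀ (σ j₀ + 1)) k * (σ j₀ + 1) = D σ k * (σ j₀ + 1 + k) := by
  classical
  set h : ℝ → ℝ := fun a => Real.Gamma (a + 1 + k) / Real.Gamma (a + 1) with hh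
  have e1 : D (Function.update σ j₀ (σ j₀ + 1)) k
      = h (σ j₀ + 1) * ∏ j ∈ Finset.univ \ {j₀}, h (σ j) := by
    rw [D]
    have : (fun j => Real.Gamma (Function.update σ j₀ (σ j₀ + 1) j + 1 + k) /
        Real.Gamma (Function.update σ j₀ (σ j₀ + 1) j + 1))
        = Function.update (fun j => h (σ j)) j₀ (h (σ j₀ + 1)) := by
      funext j
      rcases eq_or_ne j j₀ with rfl | hne
      · simp [hh]
      · simp [Function.update_of_ne hne, hh]
    rw [show (∏ j, Real.Gamma (Function.update σ j₀ (σ j₀ + 1) j + 1 + k) /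
        Real.Gamma (Function.update σ j₀ (σ j₀ + 1) j + 1))
        = ∏ j, Function.update (fun j => h (σ j)) j₀ (h (σ j₀ + 1)) j from by rw [this]]
    exact Finset.prod_update_of_mem (Finset.mem_univ j₀) _ _
  have e2 : D σ k = h (σ j₀) * ∏ j ∈ Finset.univ \ {j₀}, h (σ j) := by
    rw [D]
    exact Finset.prod_eq_mul_prod_sdiff_singleton_of_mem (Finset.mem_univ j₀) _
  have hs := sig_pos hσ j₀
  have hsk := sig_k_pos hσ j₀ k
  have key : h (σ j₀ + 1) * (σ j₀ + 1) = h (σ j₀) * (σ j₀ + 1 + k) := by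
    rw [hh]
    simp only []
    have g1 : σ j₀ + 1 + 1 + (k:ℝ) = (σ j₀ + 1 + k) + 1 := by ring
    have g2 : σ j₀ + 1 + 1 = (σ j₀ + 1) + 1 := by ring
    rw [g1, g2, Real.Gamma_add_one hsk.ne', Real.Gamma_add_one hs.ne']
    have hG1 := (Real.Gamma_pos_of_pos hs).ne'
    have hG2 := (Real.Gamma_pos_of_pos hsk).ne'
    field_simp
  rw [e1, e2]
  calc (h (σ j₀ + 1) * ∏ j ∈ Finset.univ \ {j₀}, h (σ j)) * (σ j₀ + 1)
      = (h (σ j₀ + 1) * (σ j₀ + 1)) * ∏ j ∈ Finset.univ \ {j₀}, h (σ j) := by ring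
    _ = (h (σ j₀) * (σ j₀ + 1 + k)) * ∏ j ∈ Finset.univ \ {j₀}, h (σ j) := by rw [key]
    _ = _ := by ring

lemma c_update (hσ : ∀ j, -1 < σ j) (j₀ : Fin m) (k : ℕ) :
    (σ j₀ + 1 + k) * c (Function.update σ j₀ (σ j₀ + 1)) k = (σ j₀ + 1) * c σ k := by
  have hD := D_update hσ j₀ k
  have h1 : 0 < D (Function.update σ j₀ (σ j₀ + 1)) k := D_pos (update_gt hσ j₀) k
  have h2 : 0 < D σ k := D_pos hσ k
  have h3 : (0:ℝ) < k.factorial := by exact_mod_cast k.factorial_pos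
  have hs := sig_pos hσ j₀
  have hsk := sig_k_pos hσ j₀ k
  rw [c, c, mul_div_assoc', mul_div_assoc', div_eq_div_iff
    (by positivity) (by positivity)]
  linear_combination (-((-1:ℝ)^k * (k.factorial:ℝ))) * hD

lemma raise_sum_identity (hσ : ∀ j, -1 < σ j) (j₀ : Fin m) (t : ℝ) :
    (σ j₀ + 1) * f (Function.update σ j₀ (σ j₀ + 1)) t
      + t * (∑' k : ℕ, (k:ℝ) * c (Function.update σ j₀ (σ j₀ + 1)) k * t ^ (k-1))
      = (σ j₀ + 1) * f σ t := by
  set τ := Function.update σ j₀ (σ j₀ + 1) with hτdef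
  have hτ : ∀ j, -1 < τ j := update_gt hσ j₀
  have hsum1 : Summable (fun k : ℕ => c τ k * t ^ k) := summable_c_pow (c_bound hτ) t
  have hsum2 : Summable (fun k : ℕ => (k:ℝ) * c τ k * t ^ k) := by
    have h := (summable_kc_pow (c_bound hτ) t).mul_right t
    apply h.congr
    intro k
    match k with
    | 0 => simp
    | (n+1) => simp only [Nat.add_sub_cancel, pow_succ]; ring
  have S1 : t * (∑' k : ℕ, (k:ℝ) * c τ k * t ^ (k-1))
      = ∑' k : ℕ, (k:ℝ) * c τ k * t ^ k := by
    rw [← tsum_mul_left]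
    apply tsum_congr
    intro k
    match k with
    | 0 => simp
    | (n+1) => simp only [Nat.add_sub_cancel]; ring
  have S2 : (σ j₀ + 1) * f τ t = ∑' k : ℕ, (σ j₀ + 1) * (c τ k * t ^ k) := by
    rw [f, ← tsum_mul_left]
  rw [S1, S2, ← Summable.tsum_add (hsum1.mul_left _) hsum2]
  have S3 : (σ j₀ + 1) * f σ t = ∑' k : ℕ, (σ j₀ + 1) * (c σ k * t ^ k) := by
    rw [f, ← tsum_mul_left]
  rw [S3]
  apply tsum_congr
  intro k
  have := c_update hσ j₀ k
  calc (σ j₀ + 1) * (c τ k * t ^ k) + (k:ℝ) * c τ k * t ^ k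
      = ((σ j₀ + 1 + k) * c τ k) * t ^ k := by ring
    _ = ((σ j₀ + 1) * c σ k) * t ^ k := by rw [this]
    _ = (σ j₀ + 1) * (c σ k * t ^ k) := by ring

lemma raise_pos (hσ : ∀ j, -1 < σ j) (j₀ : Fin m) {T : ℝ}
    (hpos : ∀ t ∈ Set.Ioo (0:ℝ) T, 0 < f σ t) :
    ∀ t ∈ Set.Ioo (0:ℝ) T, 0 < f (Function.update σ j₀ (σ j₀ + 1)) t := by
  set τ := Function.update σ j₀ (σ j₀ + 1) with hτdef
  have hτ : ∀ j, -1 < τ j := update_gt hσ j₀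
  have hs : 0 < σ j₀ + 1 := sig_pos hσ j₀
  set φ : ℝ → ℝ := fun t => t ^ (σ j₀ + 1 : ℝ) * f τ t with hφ
  have hφcont : ContinuousOn φ (Set.Icc 0 T) := by
    intro t _
    exact (((Real.continuousAt_rpow_const t _ (Or.inr hs.le)).mul
      ((f_continuous hτ).continuousAt))).continuousWithinAt
  have hmono : StrictMonoOn φ (Set.Icc 0 T) := by
    apply strictMonoOn_of_deriv_pos (convex_Icc 0 T) hφcont
    rw [interior_Icc]
    intro t ht
    have hdpow : HasDerivAt (fun t : ℝ => t ^ (σ j₀ + 1 : ℝ))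
        ((σ j₀ + 1) * t ^ (σ j₀ : ℝ)) t := by
      have := Real.hasDerivAt_rpow_const (p := σ j₀ + 1) (Or.inl ht.1.ne')
      simpa using this
    have hd : HasDerivAt φ ((σ j₀ + 1) * t ^ (σ j₀ : ℝ) * f τ t
        + t ^ (σ j₀ + 1 : ℝ) * (∑' k : ℕ, (k:ℝ) * c τ k * t ^ (k-1))) t :=
      hdpow.mul (hasDerivAt_f hτ t)
    rw [hd.deriv]
    have key := raise_sum_identity hσ j₀ t
    have hrw : (σ j₀ + 1) * t ^ (σ j₀ : ℝ) * f τ t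
        + t ^ (σ j₀ + 1 : ℝ) * (∑' k : ℕ, (k:ℝ) * c τ k * t ^ (k-1))
        = t ^ (σ j₀ : ℝ) * ((σ j₀ + 1) * f σ t) := by
      rw [Real.rpow_add_one ht.1.ne']
      linear_combination (t ^ (σ j₀ : ℝ)) * key
    rw [hrw]
    exact mul_pos (Real.rpow_pos_of_pos ht.1 _) (mul_pos hs (hpos t ht))
  intro t ht
  have h0t : (0:ℝ) ∈ Set.Icc (0:ℝ) T := Set.mem_Icc.mpr ⟨le_refl _, (ht.1.trans ht.2).le⟩
  have htt : t ∈ Set.Icc (0:ℝ) T := Set.mem_Icc.mpr ⟨ht.1.le, ht.2.le⟩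
  have := hmono h0t htt ht.1
  rw [hφ] at this
  simp only [] at this
  rw [Real.zero_rpow hs.ne', zero_mul] at this
  have hpowpos := Real.rpow_pos_of_pos ht.1 (σ j₀ + 1)
  by_contra hcon
  push_neg at hcon
  nlinarith

lemma all_raise_pos (hσ : ∀ j, -1 < σ j) {T : ℝ}
    (hpos : ∀ t ∈ Set.Ioo (0:ℝ) T, 0 < f σ t) :
    ∀ t ∈ Set.Ioo (0:ℝ) T, 0 < f (fun j => σ j + 1) t := by
  classical
  suffices H : ∀ S : Finset (Fin m), ∀ t ∈ Set.Ioo (0:ℝ) T,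
      0 < f (fun j => σ j + (if j ∈ S then 1 else 0)) t by
    have h := H Finset.univ
    simpa using h
  intro S
  induction S using Finset.induction_on with
  | empty => simpa using hpos
  | @insert j₀ S hj₀ ih =>
    have hSσ : ∀ j, -1 < σ j + (if j ∈ S then 1 else 0) := by
      intro j
      have := hσ j
      split <;> linarith
    have heq : (fun j => σ j + (if j ∈ insert j₀ S then 1 else 0))
        = Function.update (fun j => σ j + (if j ∈ S then 1 else 0)) j₀
            ((σ j₀ + (if j₀ ∈ S then 1 else 0)) + 1) := by
      funext j
      rcases eq_or_ne j j₀ with rfl | hne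
      · simp [hj₀]
      · rw [Function.update_of_ne hne]
        simp [Finset.mem_insert, hne]
    rw [heq]
    exact raise_pos hSσ j₀ ih

lemma sigp_gt (hσ : ∀ j, -1 < σ j) : ∀ j, -1 < σ j + 1 := fun j => by linarith [hσ j]

lemma D_shift (hσ : ∀ j, -1 < σ j) (k : ℕ) :
    D σ (k+1) = (∏ j, (σ j + 1)) * D (fun j => σ j + 1) k := by
  rw [D, D, ← Finset.prod_mul_distrib]
  refine Finset.prod_congr rfl fun j _ => ?_
  have hs := sig_pos hσ j
  have g1 : σ j + 1 + ((k:ℝ) + 1) = (σ j + 1 + 1) + k := by ring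
  have g2 : σ j + 1 + 1 = (σ j + 1) + 1 := by ring
  have hG1 := (Real.Gamma_pos_of_pos hs).ne'
  have hG2 : Real.Gamma (σ j + 1 + 1) = (σ j + 1) * Real.Gamma (σ j + 1) :=
    Real.Gamma_add_one hs.ne'
  push_cast
  rw [g1, hG2]
  field_simp

lemma deriv_c (hσ : ∀ j, -1 < σ j) (k : ℕ) :
    ((k:ℝ)+1) * c σ (k+1) = -(∏ j, (σ j + 1))⁻¹ * c (fun j => σ j + 1) k := by
  have hD := D_shift hσ k
  have h1 : 0 < D σ (k+1) := D_pos hσ (k+1)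
  have h2 : 0 < D (fun j => σ j + 1) k := D_pos (sigp_gt hσ) k
  have h3 : (0:ℝ) < k.factorial := by exact_mod_cast k.factorial_pos
  have hP : (0:ℝ) < ∏ j, (σ j + 1) := Finset.prod_pos fun j _ => sig_pos hσ j
  rw [c, c]
  have hfac : ((k+1).factorial : ℝ) = ((k:ℝ)+1) * k.factorial := by
    rw [Nat.factorial_succ]; push_cast; ring
  rw [hfac, pow_succ, hD]
  field_simp

lemma deriv_f_neg (hσ : ∀ j, -1 < σ j) (t : ℝ) :
    HasDerivAt (f σ) (-(∏ j, (σ j + 1))⁻¹ * f (fun j => σ j + 1) t) t := by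
  have h := hasDerivAt_f hσ t
  convert h using 1
  rw [Summable.tsum_eq_zero_add (summable_kc_pow (c_bound hσ) t)]
  simp only [Nat.cast_zero, zero_mul, Nat.add_sub_cancel, zero_add]
  rw [f, ← tsum_mul_left]
  apply tsum_congr
  intro k
  push_cast
  rw [show -(∏ j, (σ j + 1))⁻¹ * (c (fun j => σ j + 1) k * t ^ k)
      = (-(∏ j, (σ j + 1))⁻¹ * c (fun j => σ j + 1) k) * t ^ k from by ring,
    ← deriv_c hσ k]

lemma f_strictAntiOn (hσ : ∀ j, -1 < σ j) {T : ℝ}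
    (hpos : ∀ t ∈ Set.Ioo (0:ℝ) T, 0 < f σ t) :
    StrictAntiOn (f σ) (Set.Icc 0 T) := by
  apply strictAntiOn_of_deriv_neg (convex_Icc 0 T) (f_continuous hσ).continuousOn
  rw [interior_Icc]
  intro t ht
  rw [(deriv_f_neg hσ t).deriv]
  have hP : (0:ℝ) < ∏ j, (σ j + 1) := Finset.prod_pos fun j _ => sig_pos hσ j
  have hfp : 0 < f (fun j => σ j + 1) t := all_raise_pos hσ hpos t ht
  have : 0 < (∏ j, (σ j + 1))⁻¹ * f (fun j => σ j + 1) t :=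
    mul_pos (inv_pos.mpr hP) hfp
  linarith

lemma c_one (hσ : ∀ j, -1 < σ j) : c σ 1 = -(∏ j, (σ j + 1))⁻¹ := by
  have hD1 : D σ 1 = ∏ j, (σ j + 1) := by
    have := D_shift hσ 0
    rw [D_zero (sigp_gt hσ), mul_one] at this
    exact this
  rw [c, hD1]
  norm_num
  rw [neg_div, one_div]

lemma c_two (hσ : ∀ j, -1 < σ j) :
    c σ 2 = (∏ j, (σ j + 1))⁻¹ * (∏ j, (σ j + 2))⁻¹ / 2 := by
  have hD1p : D (fun j => σ j + 1) 1 = ∏ j, (σ j + 2) := by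
    have := D_shift (sigp_gt hσ) 0
    rw [D_zero (sigp_gt (sigp_gt hσ)), mul_one] at this
    rw [this]
    refine Finset.prod_congr rfl fun j _ => by ring
  have hD2 : D σ 2 = (∏ j, (σ j + 1)) * ∏ j, (σ j + 2) := by
    have := D_shift hσ 1
    rw [hD1p] at this
    exact this
  rw [c, hD2]
  norm_num
  ring

lemma tail_bound (hσ : ∀ j, -1 < σ j) : ∃ C : ℝ, 0 ≤ C ∧ ∀ t : ℝ, |t| ≤ 1 →
    |f σ t - (1 + c σ 1 * t + c σ 2 * t^2)| ≤ C * |t|^3 := by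
  have hsum : Summable (fun k : ℕ => c σ k) := by
    have := summable_c_pow (c_bound hσ) 1
    simpa using this
  have hsum3 : Summable (fun k : ℕ => |c σ (k+3)|) :=
    ((summable_nat_add_iff 3).mpr hsum).abs
  refine ⟨∑' k : ℕ, |c σ (k+3)|, tsum_nonneg (fun k => abs_nonneg _), fun t ht => ?_⟩
  have hsumt : Summable (fun k : ℕ => c σ k * t ^ k) := summable_c_pow (c_bound hσ) t
  have hsplit := Summable.sum_add_tsum_nat_add 3 hsumt
  have hrange : ∑ k ∈ Finset.range 3, c σ k * t ^ k
      = 1 + c σ 1 * t + c σ 2 * t ^ 2 := by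
    rw [Finset.sum_range_succ, Finset.sum_range_succ, Finset.sum_range_one, c_zero hσ]
    ring
  have heq : f σ t - (1 + c σ 1 * t + c σ 2 * t^2)
      = ∑' k : ℕ, c σ (k+3) * t ^ (k+3) := by
    rw [f, ← hsplit, hrange]; ring
  rw [heq]
  have hsummand : ∀ k : ℕ, |c σ (k+3) * t ^ (k+3)| ≤ |c σ (k+3)| * |t|^3 := by
    intro k
    rw [abs_mul, abs_pow]
    apply mul_le_mul_of_nonneg_left _ (abs_nonneg _)
    calc |t| ^ (k+3) = |t| ^ k * |t| ^ 3 := by rw [pow_add]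
      _ ≤ 1 * |t| ^ 3 := by
          apply mul_le_mul_of_nonneg_right _ (by positivity)
          exact pow_le_one₀ (abs_nonneg t) ht
      _ = |t| ^ 3 := by ring
  have hsnorm : Summable (fun k : ℕ => ‖c σ (k+3) * t ^ (k+3)‖) := by
    refine Summable.of_nonneg_of_le (fun k => norm_nonneg _) (fun k => ?_)
      (hsum3.mul_right (|t|^3))
    rw [Real.norm_eq_abs]
    exact hsummand k
  calc |∑' k : ℕ, c σ (k+3) * t ^ (k+3)| ≤ ∑' k : ℕ, ‖c σ (k+3) * t ^ (k+3)‖ :=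
        norm_tsum_le_tsum_norm hsnorm
    _ ≤ ∑' k : ℕ, |c σ (k+3)| * |t|^3 := by
        apply Summable.tsum_le_tsum _ hsnorm (hsum3.mul_right (|t|^3))
        intro k
        rw [Real.norm_eq_abs]
        exact hsummand k
    _ = (∑' k : ℕ, |c σ (k+3)|) * |t|^3 := tsum_mul_right

lemma hyperF_eq_f (σ : Fin m → ℝ) (x : ℝ) :
    hyperF m σ x = f σ ((x / ((m:ℝ) + 1)) ^ (m+1)) := by
  rw [hyperF, f]
  apply tsum_congr
  intro k
  rw [c, neg_pow, D]
  ring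

end HB

open HB in
theorem hyperBessel_psi_props {m : ℕ} (hm : 2 ≤ m) (σ : Fin m → ℝ)
    (hσ : ∀ j, -1 < σ j) (p : ℕ) (hp : p = m + 1)
    (μ : ℕ → ℝ) (hμ : ∀ k, μ k = ∏ j, (σ j + k)⁻¹)
    (j₁ : ℝ) (hj₁ : 0 < j₁) (hzero : hyperF m σ j₁ = 0)
    (hfirst : ∀ y ∈ Set.Ioo (0 : ℝ) j₁, hyperF m σ y ≠ 0)
    (ψ : ℝ → ℝ) (hψ : ∀ x, ψ x = -Real.log (hyperF m σ x)) :
    ContinuousOn ψ (Set.Ico 0 j₁) ∧ StrictMonoOn ψ (Set.Ico 0 j₁) ∧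
      ψ 0 = 0 ∧ Tendsto ψ (nhdsWithin j₁ (Set.Iio j₁)) atTop ∧
      (fun x : ℝ => ψ x -
          (μ 1 * (x / p) ^ p + 1 / 2 * μ 1 * (μ 1 - μ 2) * (x / p) ^ (2 * p)))
        =O[nhdsWithin 0 (Set.Ioi 0)] fun x : ℝ => x ^ (3 * p) := by
  subst hp
  have hm1 : (0:ℝ) < (m:ℝ) + 1 := by positivity
  set T : ℝ → ℝ := fun x => (x / ((m:ℝ) + 1)) ^ (m+1) with hTdef
  have hTcont : Continuous T := by
    apply Continuous.pow
    exact continuous_id.div_const _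
  have hT0 : T 0 = 0 := by
    simp [hTdef]
  have hFf : ∀ x, hyperF m σ x = f σ (T x) := fun x => hyperF_eq_f σ x
  set t₁ : ℝ := T j₁ with ht₁def
  have ht₁pos : 0 < t₁ := pow_pos (div_pos hj₁ hm1) _
  have hzf : f σ t₁ = 0 := by rw [← hFf]; exact hzero
  have hFc : Continuous (hyperF m σ) := by
    have : hyperF m σ = fun x => f σ (T x) := funext hFf
    rw [this]
    exact (f_continuous hσ).comp hTcont
  have hF0 : hyperF m σ 0 = 1 := by rw [hFf, hT0, f_zero hσ]
  -- positivity of F on [0, j₁)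
  have hFpos : ∀ x ∈ Set.Ico (0:ℝ) j₁, 0 < hyperF m σ x := by
    intro x hx
    rcases eq_or_lt_of_le hx.1 with h0 | h0
    · rw [← h0, hF0]; norm_num
    · by_contra hc
      push_neg at hc
      have hne := hfirst x ⟨h0, hx.2⟩
      have hlt : hyperF m σ x < 0 := lt_of_le_of_ne hc hne
      have hsub := intermediate_value_Ioo' h0.le hFc.continuousOn
      have h0mem : (0:ℝ) ∈ Set.Ioo (hyperF m σ x) (hyperF m σ 0) := by
        rw [hF0]; exact ⟨hlt, one_pos⟩
      obtain ⟨z, hz, hz0⟩ := hsub h0mem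
      exact hfirst z ⟨hz.1, hz.2.trans hx.2⟩ hz0
  -- surjectivity of T onto (0, t₁)
  have hsurj : Set.Ioo (0:ℝ) t₁ ⊆ T '' Set.Ioo 0 j₁ := by
    have h := intermediate_value_Ioo hj₁.le hTcont.continuousOn
    rw [hT0] at h
    exact h
  have hfpos : ∀ t ∈ Set.Ioo (0:ℝ) t₁, 0 < f σ t := by
    intro t ht
    obtain ⟨x, hx, rfl⟩ := hsurj ht
    rw [← hFf]
    exact hFpos x ⟨hx.1.le, hx.2⟩
  have hanti : StrictAntiOn (f σ) (Set.Icc 0 t₁) := f_strictAntiOn hσ hfpos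
  -- T monotonicity facts
  have hTmem : ∀ x ∈ Set.Ico (0:ℝ) j₁, T x ∈ Set.Icc (0:ℝ) t₁ := by
    intro x hx
    constructor
    · show (0:ℝ) ≤ (x / ((m:ℝ)+1))^(m+1)
      exact pow_nonneg (div_nonneg hx.1 hm1.le) _
    · show (x / ((m:ℝ)+1))^(m+1) ≤ (j₁ / ((m:ℝ)+1))^(m+1)
      have : x / ((m:ℝ)+1) ≤ j₁ / ((m:ℝ)+1) := by
        apply div_le_div_of_nonneg_right hx.2.le hm1.le
      exact pow_le_pow_left₀ (div_nonneg hx.1 hm1.le) this _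
  have hTlt : ∀ x, 0 ≤ x → ∀ y, x < y → T x < T y := by
    intro x hx y hxy
    show (x / ((m:ℝ)+1))^(m+1) < (y / ((m:ℝ)+1))^(m+1)
    apply pow_lt_pow_left₀ _ (div_nonneg hx hm1.le) (Nat.succ_ne_zero m)
    exact div_lt_div_of_pos_right hxy hm1
  have hFanti : ∀ x ∈ Set.Ico (0:ℝ) j₁, ∀ y ∈ Set.Ico (0:ℝ) j₁, x < y →
      hyperF m σ y < hyperF m σ x := by
    intro x hx y hy hxy
    rw [hFf, hFf]
    exact hanti (hTmem x hx) (hTmem y hy) (hTlt x hx.1 y hxy)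
  have hψfun : ψ = fun x => -Real.log (hyperF m σ x) := funext hψ
  refine ⟨?_, ?_, ?_, ?_, ?_⟩
  · -- continuity
    rw [hψfun]
    apply ContinuousOn.neg
    intro x hx
    exact ((Real.continuousAt_log (hFpos x hx).ne').comp hFc.continuousAt).continuousWithinAt
  · -- strict monotonicity
    intro x hx y hy hxy
    rw [hψ, hψ]
    have h1 := hFanti x hx y hy hxy
    have h2 := hFpos y hy
    exact neg_lt_neg (Real.log_lt_log h2 h1)
  · rw [hψ 0, hF0, Real.log_one, neg_zero]
  · -- tendsto atTop
    have h1 : Tendsto (hyperF m σ) (nhdsWithin j₁ (Set.Iio j₁)) (nhds 0) := by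
      have := hFc.continuousAt (x := j₁)
      rw [ContinuousAt, hzero] at this
      exact this.mono_left nhdsWithin_le_nhds
    have h2 : ∀ᶠ x in nhdsWithin j₁ (Set.Iio j₁), hyperF m σ x ∈ Set.Ioi (0:ℝ) := by
      have hmem : Set.Ioo 0 j₁ ∈ nhdsWithin j₁ (Set.Iio j₁) :=
        Ioo_mem_nhdsLT_of_mem (Set.mem_Ioc.mpr ⟨hj₁, le_refl j₁⟩)
      filter_upwards [hmem] with x hx
      exact hFpos x ⟨hx.1.le, hx.2⟩
    have h3 : Tendsto (hyperF m σ) (nhdsWithin j₁ (Set.Iio j₁)) (nhdsWithin 0 (Set.Ioi 0)) :=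
      tendsto_nhdsWithin_iff.mpr ⟨h1, h2⟩
    have h4 : Tendsto (fun x => Real.log (hyperF m σ x)) (nhdsWithin j₁ (Set.Iio j₁)) atBot :=
      Real.tendsto_log_nhdsGT_zero.comp h3
    rw [hψfun]
    exact tendsto_neg_atBot_atTop.comp h4
  · -- big-O expansion
    -- expansion coefficients
    have hμ1 : c σ 1 = -μ 1 := by
      rw [c_one hσ, hμ 1, ← Finset.prod_inv_distrib]
      push_cast
      ring
    have hμ2 : c σ 2 = μ 1 * μ 2 / 2 := by
      rw [c_two hσ, hμ 1, hμ 2, ← Finset.prod_inv_distrib, ← Finset.prod_inv_distrib]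
      push_cast
      ring
    obtain ⟨C, hC0, hC⟩ := tail_bound hσ
    set E : ℝ → ℝ := fun t => f σ t - (1 + c σ 1 * t + c σ 2 * t^2) with hEdef
    set u : ℝ → ℝ := fun t => 1 - f σ t with hudef
    have hsmall : ∀ᶠ t : ℝ in nhds 0, |t| ≤ 1 := by
      filter_upwards [Metric.closedBall_mem_nhds (0:ℝ) one_pos] with t ht
      simpa [Real.dist_eq] using ht
    have hE_O : E =O[nhds 0] (fun t => t^3) := by
      apply Asymptotics.IsBigO.of_bound C
      filter_upwards [hsmall] with t ht
      rw [Real.norm_eq_abs, Real.norm_eq_abs, abs_pow]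
      exact hC t ht
    set K : ℝ := |c σ 1| + |c σ 2| + C with hKdef
    have hK0 : (0:ℝ) ≤ K := by rw [hKdef]; positivity
    have hub : ∀ᶠ t : ℝ in nhds 0, |u t| ≤ K * |t| := by
      filter_upwards [hsmall] with t ht
      have hEb := hC t ht
      have hueq : u t = -(c σ 1 * t + c σ 2 * t^2 + E t) := by
        simp only [hudef, hEdef]; ring
      have habs := abs_nonneg t
      have hpow2 : |t|^2 ≤ |t| := by nlinarith
      have hpow3 : |t|^3 ≤ |t| := by nlinarith
      have h1 : |c σ 1 * t| = |c σ 1| * |t| := abs_mul _ _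
      have h2 : |c σ 2 * t^2| ≤ |c σ 2| * |t| := by
        rw [abs_mul, abs_pow]
        exact mul_le_mul_of_nonneg_left hpow2 (abs_nonneg _)
      have h3 : |E t| ≤ C * |t| := by
        refine hEb.trans ?_
        exact mul_le_mul_of_nonneg_left hpow3 hC0
      rw [hueq, abs_neg]
      calc |c σ 1 * t + c σ 2 * t^2 + E t|
          ≤ |c σ 1 * t + c σ 2 * t^2| + |E t| := abs_add_le _ _
        _ ≤ (|c σ 1 * t| + |c σ 2 * t^2|) + |E t| := by
            have := abs_add_le (c σ 1 * t) (c σ 2 * t^2); linarith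
        _ ≤ |c σ 1| * |t| + |c σ 2| * |t| + C * |t| := by
            rw [h1]; linarith
        _ = K * |t| := by rw [hKdef]; ring
    have hu_O : u =O[nhds 0] (fun t : ℝ => t) := by
      apply Asymptotics.IsBigO.of_bound K
      filter_upwards [hub] with t ht
      rw [Real.norm_eq_abs, Real.norm_eq_abs]
      exact ht
    have hu0 : Tendsto u (nhds 0) (nhds 0) := by
      have hcont : Continuous u := continuous_const.sub (f_continuous hσ)
      have : u 0 = 0 := by simp [hudef, f_zero hσ]
      have h := hcont.tendsto 0
      rw [this] at h
      exact h
    have hev : ∀ᶠ y : ℝ in nhds 0, |y| ≤ 1/2 := by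
      filter_upwards [Metric.closedBall_mem_nhds (0:ℝ) (by norm_num : (0:ℝ) < 1/2)] with y hy
      simpa [Real.dist_eq] using hy
    have hhalf : ∀ᶠ t : ℝ in nhds 0, |u t| ≤ 1/2 := hu0.eventually hev
    have hlog_ev : ∀ᶠ t : ℝ in nhds 0,
        |(-Real.log (f σ t)) - (u t + u t^2/2)| ≤ 2 * |u t|^3 := by
      filter_upwards [hhalf] with t h2
      have h1 : |u t| < 1 := lt_of_le_of_lt h2 (by norm_num)
      have hL := Real.abs_log_sub_add_sum_range_le h1 2
      have hsum2 : (∑ i ∈ Finset.range 2, u t^(i+1)/((i:ℝ)+1)) = u t + u t^2/2 := by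
        rw [Finset.sum_range_succ, Finset.sum_range_one]
        norm_num
      rw [hsum2] at hL
      have hf1u : f σ t = 1 - u t := by simp only [hudef]; ring
      have heq : -Real.log (f σ t) - (u t + u t^2/2)
          = -((u t + u t^2/2) + Real.log (1 - u t)) := by rw [hf1u]; ring
      rw [heq, abs_neg]
      refine hL.trans ?_
      rw [div_le_iff₀ (by linarith)]
      have hu3 : (0:ℝ) ≤ |u t|^3 := by positivity
      have hstep : |u t|^(2+1) = |u t|^3 := rfl
      rw [hstep]
      nlinarith [mul_le_mul_of_nonneg_left h2 hu3]
    have hA_O : (fun t : ℝ => -Real.log (f σ t) - (u t + u t^2/2))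
        =O[nhds 0] (fun t => t^3) := by
      apply Asymptotics.IsBigO.of_bound (2 * K^3)
      filter_upwards [hlog_ev, hub] with t h1 h2
      rw [Real.norm_eq_abs, Real.norm_eq_abs, abs_pow]
      refine h1.trans ?_
      have h3 : |u t|^3 ≤ (K * |t|)^3 :=
        pow_le_pow_left₀ (abs_nonneg _) h2 3
      calc 2 * |u t|^3 ≤ 2 * (K * |t|)^3 := by linarith
        _ = 2 * K^3 * |t|^3 := by ring
    have ht3t2 : (fun t : ℝ => t^3) =O[nhds 0] (fun t : ℝ => t^2) := by
      apply Asymptotics.IsBigO.of_bound 1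
      filter_upwards [hsmall] with t ht
      rw [Real.norm_eq_abs, Real.norm_eq_abs, abs_pow, abs_pow]
      have := abs_nonneg t
      nlinarith
    have h2a : (fun t : ℝ => u t - μ 1 * t) =O[nhds 0] (fun t => t^2) := by
      have heq : (fun t : ℝ => u t - μ 1 * t) = fun t => -(c σ 2) * t^2 - E t := by
        funext t
        simp only [hudef, hEdef]
        linear_combination (-t) * hμ1
      rw [heq]
      exact ((Asymptotics.isBigO_refl (fun t:ℝ => t^2) (nhds 0)).const_mul_left
        (-(c σ 2))).sub (hE_O.trans ht3t2)
    have h2b : (fun t : ℝ => u t + μ 1 * t) =O[nhds 0] (fun t : ℝ => t) :=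
      hu_O.add ((Asymptotics.isBigO_refl (fun t:ℝ => t) (nhds 0)).const_mul_left (μ 1))
    have hprod : (fun t : ℝ => (u t - μ 1 * t) * (u t + μ 1 * t))
        =O[nhds 0] (fun t : ℝ => t^3) := by
      have h := h2a.mul h2b
      have heq : (fun t : ℝ => t^2 * t) = fun t : ℝ => t^3 := by
        funext t; ring
      rw [heq] at h
      exact h
    have hG : (fun t : ℝ => -Real.log (f σ t)
          - (μ 1 * t + 1/2 * μ 1 * (μ 1 - μ 2) * t^2))
        =O[nhds 0] (fun t : ℝ => t^3) := by
      have heq : (fun t : ℝ => -Real.log (f σ t)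
            - (μ 1 * t + 1/2 * μ 1 * (μ 1 - μ 2) * t^2))
          = fun t => (-Real.log (f σ t) - (u t + u t^2/2))
              + ((-(E t)) + (1/2) * ((u t - μ 1 * t) * (u t + μ 1 * t))) := by
        funext t
        simp only [hudef, hEdef]
        linear_combination (-t) * hμ1 - t^2 * hμ2
      rw [heq]
      exact hA_O.add ((hE_O.neg_left).add (hprod.const_mul_left (1/2)))
    have hTt : Tendsto T (nhdsWithin 0 (Set.Ioi 0)) (nhds 0) := by
      have h := hTcont.tendsto 0
      rw [hT0] at h
      exact h.mono_left nhdsWithin_le_nhds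
    have hcomp := hG.comp_tendsto hTt
    have hgoal_eq : (fun x : ℝ => ψ x - (μ 1 * (x / ((m+1:ℕ):ℝ))^(m+1)
          + 1/2 * μ 1 * (μ 1 - μ 2) * (x / ((m+1:ℕ):ℝ))^(2*(m+1))))
        = ((fun t : ℝ => -Real.log (f σ t)
            - (μ 1 * t + 1/2 * μ 1 * (μ 1 - μ 2) * t^2)) ∘ T) := by
      funext x
      simp only [Function.comp_apply]
      rw [hψ x, hFf x]
      have e1 : (x / ((m+1:ℕ):ℝ))^(m+1) = T x := by
        simp only [hTdef]; push_cast; ring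
      have e2 : (x / ((m+1:ℕ):ℝ))^(2*(m+1)) = (T x)^2 := by
        simp only [hTdef]
        rw [mul_comm 2 (m+1), pow_mul]
        push_cast; ring
      rw [e1, e2]
    have hr : (fun x : ℝ => (T x)^3) =O[nhdsWithin 0 (Set.Ioi 0)]
        fun x : ℝ => x^(3*(m+1)) := by
      have heq : (fun x : ℝ => (T x)^3)
          = fun x : ℝ => ((((m:ℝ)+1)^(3*(m+1)))⁻¹) * x^(3*(m+1)) := by
        funext x
        simp only [hTdef]
        rw [← pow_mul, mul_comm (m+1) 3, div_pow]
        field_simp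
      rw [heq]
      exact (Asymptotics.isBigO_refl (fun x : ℝ => x^(3*(m+1)))
        (nhdsWithin 0 (Set.Ioi 0))).const_mul_left _
    rw [hgoal_eq]
    exact hcomp.trans hr
end
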